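/- arXiv:1309.4930 — 6 statements merged into one kernel-verified Lean document; each statement's English description precedes it below -/
import Mathlib

section
/- Let W be a DMC with input alphabet X and output alphabet Y, and suppose y, y' ∈ Y are distinct output symbols such that for every x ∈ X, W(y|x) > 0 if and only if W(y'|x) > 0. Let W' be the DMC obtained by combining y and y' into a single new output symbol ŷ distinct from all other output symbols, i.e., W' has output alphabet (Y \ {y,y'}) ∪ {ŷ} with W'(ŷ|x) = W(y|x) + W(y'|x) and W'(z|x) = W(z|x) for z ∈ Y \ {y,y'}. Then the zero-undetected-error capacities coincide: C_eo(W') = C_eo(W). -/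
open scoped Classical
open Real Finset

/-- The `n`-letter extension of the channel `W : X → Y → ℝ` (here `W x y` is the
probability `W(y|x)`). -/
noncomputable def Wn {X Y : Type*} (W : X → Y → ℝ) (n : ℕ)
    (x : Fin n → X) (y : Fin n → Y) : ℝ :=
  ∏ j, W (x j) (y j)

/-- The probability of erasure given that message `m` was sent, when the codebook
`c` is used with a zero-undetected-error decoder. -/
noncomputable def erasureProb {X Y : Type*} [Fintype Y] (W : X → Y → ℝ) {n M : ℕ}
    (c : Fin M → Fin n → X) (m : Fin M) : ℝ :=
  ∑ y ∈ Finset.univ.filter (fun y : Fin n → Y =>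
      1 < (Finset.univ.filter (fun m' : Fin M => 0 < Wn W n (c m') y)).card),
    Wn W n (c m) y

/-- The zero-undetected-error capacity of the channel `W : X → Y → ℝ`. -/
noncomputable def Ceo {X Y : Type*} [Fintype Y] (W : X → Y → ℝ) : ℝ :=
  sSup (insert 0 {R : ℝ | 0 ≤ R ∧ ∀ δ : ℝ, 0 < δ →
    ∃ (n M : ℕ) (c : Fin M → Fin n → X), 1 ≤ n ∧
      Real.exp (n * R) ≤ (M : ℝ) ∧ ∀ m, erasureProb W c m < δ})

/-- Combining two output symbols `y₀ ≠ y₁` that are reachable from exactly the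
same inputs into a single new output symbol does not change the
zero-undetected-error capacity.  The new output alphabet is
`Option {z : Y // z ≠ y₀ ∧ z ≠ y₁}`, where `none` plays the role of the combined
symbol `ŷ`. -/
theorem zue_capacity_combine_outputs {X Y : Type*} [Fintype X] [Fintype Y]
    [Nonempty X] [Nonempty Y] [DecidableEq Y]
    (W : X → Y → ℝ) (hW0 : ∀ x y, 0 ≤ W x y) (hW1 : ∀ x, ∑ y, W x y = 1)
    (y₀ y₁ : Y) (hne : y₀ ≠ y₁)
    (hiff : ∀ x, 0 < W x y₀ ↔ 0 < W x y₁) :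
    Ceo (fun x (z : Option {z : Y // z ≠ y₀ ∧ z ≠ y₁}) =>
        match z with
        | none => W x y₀ + W x y₁
        | some z => W x z.1) = Ceo W := by
  set Y' := Option {z : Y // z ≠ y₀ ∧ z ≠ y₁} with hY'
  set W' : X → Y' → ℝ := fun x (z : Y') =>
      match z with
      | none => W x y₀ + W x y₁
      | some z => W x z.1 with hW'
  -- the merging map
  set φ : Y → Y' := fun y =>
    if h : y = y₀ ∨ y = y₁ then none else some ⟨y, not_or.mp h⟩ with hφ
  have hφ0 : φ y₀ = none := by simp [hφ]
  have hφ1 : φ y₁ = none := by simp [hφ]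
  have hφs : ∀ (y : Y) (h0 : y ≠ y₀) (h1 : y ≠ y₁), φ y = some ⟨y, h0, h1⟩ := by
    intro y h0 h1
    simp [hφ, h0, h1]
  -- single-letter positivity congruence
  have hpos : ∀ x y, 0 < W x y ↔ 0 < W' x (φ y) := by
    intro x y
    by_cases h0 : y = y₀
    · subst h0
      rw [hφ0]
      show 0 < W x y ↔ 0 < W x y + W x y₁
      constructor
      · intro h; exact add_pos h ((hiff x).mp h)
      · intro h
        by_contra hc
        push_neg at hc
        have h1 : W x y = 0 := le_antisymm hc (hW0 x y)
        have h2 : ¬ 0 < W x y₁ := fun hp => absurd ((hiff x).mpr hp) (not_lt.mpr hc)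
        have h3 : W x y₁ = 0 := le_antisymm (not_lt.mp h2) (hW0 x y₁)
        rw [h1, h3] at h; simp at h
    · by_cases h1 : y = y₁
      · subst h1
        rw [hφ1]
        show 0 < W x y ↔ 0 < W x y₀ + W x y
        constructor
        · intro h; exact add_pos ((hiff x).mpr h) h
        · intro h
          by_contra hc
          push_neg at hc
          have ha : W x y = 0 := le_antisymm hc (hW0 x y)
          have h2 : ¬ 0 < W x y₀ := fun hp => absurd ((hiff x).mp hp) (not_lt.mpr hc)
          have h3 : W x y₀ = 0 := le_antisymm (not_lt.mp h2) (hW0 x y₀)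
          rw [ha, h3] at h; simp at h
      · rw [hφs y h0 h1]
  -- the section
  set ψ : Y' → Y := fun z => z.elim y₀ (fun w => w.1) with hψ
  have hφψ : ∀ z, φ (ψ z) = z := by
    intro z
    match z with
    | none => exact hφ0
    | some ⟨w, hw0, hw1⟩ => exact hφs w hw0 hw1
  have hpos' : ∀ x (z : Y'), 0 < W' x z ↔ 0 < W x (ψ z) := by
    intro x z
    rw [hpos x (ψ z), hφψ z]
  -- fibers of φ
  have hfib : ∀ (x : X) (z : Y'),
      W' x z = ∑ y ∈ Finset.univ.filter (fun y => φ y = z), W x y := by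
    intro x z
    match z with
    | none =>
      have : Finset.univ.filter (fun y => φ y = (none : Y')) = {y₀, y₁} := by
        ext y
        simp only [mem_filter, mem_univ, true_and, mem_insert, mem_singleton]
        constructor
        · intro h
          by_contra hc
          push_neg at hc
          rw [hφs y hc.1 hc.2] at h
          exact Option.some_ne_none _ h
        · rintro (rfl | rfl)
          exacts [hφ0, hφ1]
      rw [this, Finset.sum_pair hne]
    | some ⟨w, hw0, hw1⟩ =>
      have : Finset.univ.filter (fun y => φ y = (some ⟨w, hw0, hw1⟩ : Y')) = {w} := by
        ext y
        simp only [mem_filter, mem_univ, true_and, mem_singleton]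
        constructor
        · intro h
          by_cases h0 : y = y₀ ∨ y = y₁
          · rw [hφ] at h
            simp only [dif_pos h0] at h
            exact absurd h (Option.some_ne_none _).symm
          · push_neg at h0
            rw [hφs y h0.1 h0.2] at h
            exact congrArg Subtype.val (Option.some_injective _ h)
        · rintro rfl
          exact hφs y hw0 hw1
      rw [this, Finset.sum_singleton]
  -- n-letter positivity
  have hWnpos : ∀ n (x : Fin n → X) (y : Fin n → Y),
      0 < Wn W n x y ↔ ∀ j, 0 < W (x j) (y j) := by
    intro n x y
    constructor
    · intro h j
      rcases lt_or_eq_of_le (hW0 (x j) (y j)) with h' | h'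
      · exact h'
      · exfalso
        have : Wn W n x y = 0 := Finset.prod_eq_zero (Finset.mem_univ j) h'.symm
        rw [this] at h; exact lt_irrefl 0 h
    · intro h
      exact Finset.prod_pos fun j _ => h j
  have hW'0 : ∀ x (z : Y'), 0 ≤ W' x z := by
    intro x z
    match z with
    | none => exact add_nonneg (hW0 x y₀) (hW0 x y₁)
    | some w => exact hW0 x w.1
  have hWn'pos : ∀ n (x : Fin n → X) (z : Fin n → Y'),
      0 < Wn W' n x z ↔ ∀ j, 0 < W' (x j) (z j) := by
    intro n x z
    constructor
    · intro h j
      rcases lt_or_eq_of_le (hW'0 (x j) (z j)) with h' | h'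
      · exact h'
      · exfalso
        have : Wn W' n x z = 0 := Finset.prod_eq_zero (Finset.mem_univ j) h'.symm
        rw [this] at h; exact lt_irrefl 0 h
    · intro h
      exact Finset.prod_pos fun j _ => h j
  -- n-letter positivity congruence
  have hposn : ∀ n (x : Fin n → X) (y : Fin n → Y),
      0 < Wn W n x y ↔ 0 < Wn W' n x (fun j => φ (y j)) := by
    intro n x y
    rw [hWnpos, hWn'pos]
    exact forall_congr' fun j => hpos (x j) (y j)
  have hposn' : ∀ n (x : Fin n → X) (z : Fin n → Y'),
      0 < Wn W' n x z ↔ 0 < Wn W n x (fun j => ψ (z j)) := by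
    intro n x z
    rw [hposn n x (fun j => ψ (z j))]
    have : (fun j => φ (ψ (z j))) = z := funext fun j => hφψ (z j)
    rw [this]
  -- n-letter fiber sum
  have hfibn : ∀ n (x : Fin n → X) (z : Fin n → Y'),
      Wn W' n x z =
        ∑ y ∈ Finset.univ.filter (fun y : Fin n → Y => (fun j => φ (y j)) = z),
          Wn W n x y := by
    intro n x z
    have h1 : Wn W' n x z = ∏ j, ∑ w ∈ Finset.univ.filter (fun y => φ y = z j), W (x j) w := by
      unfold Wn
      exact Finset.prod_congr rfl fun j _ => hfib (x j) (z j)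
    rw [h1, Finset.prod_univ_sum]
    have h2 : Fintype.piFinset (fun j => Finset.univ.filter (fun y => φ y = z j)) =
        Finset.univ.filter (fun y : Fin n → Y => (fun j => φ (y j)) = z) := by
      ext p
      simp only [Fintype.mem_piFinset, mem_filter, mem_univ, true_and]
      exact ⟨fun h => funext h, fun h j => congrFun h j⟩
    rw [h2]
    rfl
  -- erasure probabilities agree
  have key : ∀ (n M : ℕ) (c : Fin M → Fin n → X) (m : Fin M),
      erasureProb W' c m = erasureProb W c m := by
    intro n M c m
    unfold erasureProb
    rw [Finset.sum_filter, Finset.sum_filter]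
    have step : ∀ z : Fin n → Y',
        (if 1 < (Finset.univ.filter (fun m' : Fin M => 0 < Wn W' n (c m') z)).card
          then Wn W' n (c m) z else 0) =
        ∑ y ∈ Finset.univ.filter (fun y : Fin n → Y => (fun j => φ (y j)) = z),
          (if 1 < (Finset.univ.filter (fun m' : Fin M => 0 < Wn W n (c m') y)).card
            then Wn W n (c m) y else 0) := by
      intro z
      have hcard : ∀ y ∈ Finset.univ.filter (fun y : Fin n → Y => (fun j => φ (y j)) = z),
          (Finset.univ.filter (fun m' : Fin M => 0 < Wn W n (c m') y)).card =
          (Finset.univ.filter (fun m' : Fin M => 0 < Wn W' n (c m') z)).card := by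
        intro y hy
        rw [mem_filter] at hy
        congr 1
        apply Finset.filter_congr
        intro m' _
        rw [hposn n (c m') y, hy.2]
      by_cases hc : 1 < (Finset.univ.filter (fun m' : Fin M => 0 < Wn W' n (c m') z)).card
      · rw [if_pos hc, hfibn n (c m) z]
        apply Finset.sum_congr rfl
        intro y hy
        rw [if_pos (by rw [hcard y hy]; exact hc)]
      · rw [if_neg hc]
        symm
        apply Finset.sum_eq_zero
        intro y hy
        rw [if_neg (by rw [hcard y hy]; exact hc)]
    calc ∑ z : Fin n → Y',
        (if 1 < (Finset.univ.filter (fun m' : Fin M => 0 < Wn W' n (c m') z)).card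
          then Wn W' n (c m) z else 0)
        = ∑ z : Fin n → Y', ∑ y ∈ Finset.univ.filter
            (fun y : Fin n → Y => (fun j => φ (y j)) = z),
          (if 1 < (Finset.univ.filter (fun m' : Fin M => 0 < Wn W n (c m') y)).card
            then Wn W n (c m) y else 0) := Finset.sum_congr rfl fun z _ => step z
      _ = ∑ y : Fin n → Y,
          (if 1 < (Finset.univ.filter (fun m' : Fin M => 0 < Wn W n (c m') y)).card
            then Wn W n (c m) y else 0) :=
        Finset.sum_fiberwise Finset.univ (fun y : Fin n → Y => (fun j => φ (y j))) _
  -- conclude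
  unfold Ceo
  congr 2
  ext R
  simp only [Set.mem_setOf_eq]
  constructor
  · rintro ⟨hR, h⟩
    refine ⟨hR, fun δ hδ => ?_⟩
    obtain ⟨n, M, c, h1, h2, h3⟩ := h δ hδ
    exact ⟨n, M, c, h1, h2, fun m => (key n M c m) ▸ h3 m⟩
  · rintro ⟨hR, h⟩
    refine ⟨hR, fun δ hδ => ?_⟩
    obtain ⟨n, M, c, h1, h2, h3⟩ := h δ hδ
    exact ⟨n, M, c, h1, h2, fun m => (key n M c m) ▸ h3 m⟩
end

section
/- For any DMC W, the zero-undetected-error capacity is given by the multi-letter formula C_eo(W) = lim_{n→∞} (1/n) max_{P ∈ U_n} Σ_{y ∈ Y^n} (PW^n)(y) · log( 1 / P(X^n(y)) ), where U_n is the collection of PMFs on X^n that are uniform over their support; moreover the limit exists and equals the supremum over n of the same expression. -/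
open scoped Classical
open Real Finset Filter

/-- The maximum, over PMFs `P` on `X^n` that are uniform over their support, of
`∑_y (PWⁿ)(y) log (1 / P(Xⁿ(y)))`, where `Xⁿ(y) = {x : Wⁿ(y|x) > 0}`. -/
noncomputable def forneyN {X Y : Type*} [Fintype X] [Fintype Y]
    (W : X → Y → ℝ) (n : ℕ) : ℝ :=
  sSup {v : ℝ | ∃ P : (Fin n → X) → ℝ,
    (∀ x, 0 ≤ P x) ∧ (∑ x, P x = 1) ∧
    (∀ x, P x ≠ 0 →
      P x = 1 / ((Finset.univ.filter (fun x' : Fin n → X => P x' ≠ 0)).card : ℝ)) ∧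
    v = ∑ y : Fin n → Y, (∑ x, P x * Wn W n x y) *
          Real.log (1 / ∑ x ∈ Finset.univ.filter (fun x : Fin n → X => 0 < Wn W n x y), P x)}

/-! ### Auxiliary generic development -/

set_option linter.unusedSectionVars false

section Generic

variable {A B : Type*} [Fintype A] [Fintype B]

/-- Generic erasure probability for an abstract (one-shot) channel `K`. -/
noncomputable def eraseg (K : A → B → ℝ) {M : ℕ} (c : Fin M → A) (m : Fin M) : ℝ :=
  ∑ b ∈ Finset.univ.filter (fun b : B =>
      1 < (Finset.univ.filter (fun m' : Fin M => 0 < K (c m') b)).card),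
    K (c m) b

/-- Output distribution. -/
noncomputable def Qg (K : A → B → ℝ) (P : A → ℝ) (b : B) : ℝ := ∑ a, P a * K a b

/-- Probability of the set of inputs compatible with output `b`. -/
noncomputable def PXg (K : A → B → ℝ) (P : A → ℝ) (b : B) : ℝ :=
  ∑ a ∈ Finset.univ.filter (fun a => 0 < K a b), P a

/-- The Forney/Csiszár–Narayan functional. -/
noncomputable def valg (K : A → B → ℝ) (P : A → ℝ) : ℝ :=
  ∑ b, Qg K P b * Real.log (1 / PXg K P b)

def IsPmf (P : A → ℝ) : Prop := (∀ a, 0 ≤ P a) ∧ ∑ a, P a = 1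

def IsUnifPmf (P : A → ℝ) : Prop :=
  IsPmf P ∧ ∀ a, P a ≠ 0 →
    P a = 1 / ((Finset.univ.filter (fun a' => P a' ≠ 0)).card : ℝ)

lemma PXg_eq_sum_ite (K : A → B → ℝ) (P : A → ℝ) (b : B) :
    PXg K P b = ∑ a, if 0 < K a b then P a else 0 := by
  rw [PXg, Finset.sum_filter]

variable {K : A → B → ℝ} {P : A → ℝ}

lemma Qg_nonneg (hK0 : ∀ a b, 0 ≤ K a b) (hP0 : ∀ a, 0 ≤ P a) (b : B) :
    0 ≤ Qg K P b :=
  Finset.sum_nonneg fun a _ => mul_nonneg (hP0 a) (hK0 a b)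

lemma sum_Qg (hK1 : ∀ a, ∑ b, K a b = 1) :
    ∑ b, Qg K P b = ∑ a, P a := by
  simp only [Qg]
  rw [Finset.sum_comm]
  simp [← Finset.mul_sum, hK1]

lemma PXg_nonneg (hP0 : ∀ a, 0 ≤ P a) (b : B) : 0 ≤ PXg K P b :=
  Finset.sum_nonneg fun a _ => hP0 a

lemma PXg_le_one (hP0 : ∀ a, 0 ≤ P a) (hP1 : ∑ a, P a = 1) (b : B) :
    PXg K P b ≤ 1 := by
  rw [← hP1]
  exact Finset.sum_le_sum_of_subset_of_nonneg (Finset.filter_subset _ _)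
    (fun a _ _ => hP0 a)

lemma exists_of_Qg_pos (hK0 : ∀ a b, 0 ≤ K a b) (hP0 : ∀ a, 0 ≤ P a) {b : B}
    (h : 0 < Qg K P b) : ∃ a, 0 < P a ∧ 0 < K a b := by
  by_contra hcon
  push_neg at hcon
  have : Qg K P b ≤ 0 := by
    refine Finset.sum_nonpos fun a _ => ?_
    rcases lt_or_ge 0 (P a) with hpa | hpa
    · have := hcon a hpa
      have h0 : K a b = 0 := le_antisymm this (hK0 a b)
      simp [h0]
    · exact mul_nonpos_of_nonpos_of_nonneg (le_antisymm hpa (hP0 a) ▸ le_rfl) (hK0 a b)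
  linarith

lemma le_PXg_of_lb (hK0 : ∀ a b, 0 ≤ K a b) (hP0 : ∀ a, 0 ≤ P a) {c : ℝ}
    (hc : ∀ a, P a ≠ 0 → c ≤ P a) {b : B} (h : 0 < Qg K P b) :
    c ≤ PXg K P b := by
  obtain ⟨a, hPa, hKa⟩ := exists_of_Qg_pos hK0 hP0 h
  calc c ≤ P a := hc a (ne_of_gt hPa)
    _ ≤ PXg K P b := by
        refine Finset.single_le_sum (f := P) (fun a _ => hP0 a) ?_
        simp [hKa]

lemma PXg_pos (hK0 : ∀ a b, 0 ≤ K a b) (hP0 : ∀ a, 0 ≤ P a) {b : B}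
    (h : 0 < Qg K P b) : 0 < PXg K P b := by
  obtain ⟨a, hPa, hKa⟩ := exists_of_Qg_pos hK0 hP0 h
  calc (0:ℝ) < P a := hPa
    _ ≤ PXg K P b := by
        refine Finset.single_le_sum (f := P) (fun a _ => hP0 a) ?_
        simp [hKa]

lemma valg_term_nonneg (hK0 : ∀ a b, 0 ≤ K a b) (hP0 : ∀ a, 0 ≤ P a)
    (hP1 : ∑ a, P a = 1) (b : B) :
    0 ≤ Qg K P b * Real.log (1 / PXg K P b) := by
  rcases eq_or_lt_of_le (Qg_nonneg hK0 hP0 b) with h | h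
  · simp [← h]
  · refine mul_nonneg h.le (Real.log_nonneg ?_)
    rw [le_div_iff₀ (PXg_pos hK0 hP0 h)]
    simpa using PXg_le_one hP0 hP1 b

lemma valg_nonneg (hK0 : ∀ a b, 0 ≤ K a b) (hP0 : ∀ a, 0 ≤ P a)
    (hP1 : ∑ a, P a = 1) : 0 ≤ valg K P :=
  Finset.sum_nonneg fun b _ => valg_term_nonneg hK0 hP0 hP1 b

lemma valg_le (hK0 : ∀ a b, 0 ≤ K a b) (hK1 : ∀ a, ∑ b, K a b = 1)
    (hP0 : ∀ a, 0 ≤ P a) (hP1 : ∑ a, P a = 1) {c : ℝ} (hc0 : 0 < c) (hc1 : c ≤ 1)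
    (hc : ∀ a, P a ≠ 0 → c ≤ P a) :
    valg K P ≤ Real.log (1 / c) := by
  have hlog : 0 ≤ Real.log (1 / c) := Real.log_nonneg (by
    rw [le_div_iff₀ hc0]; simpa using hc1)
  have : valg K P ≤ ∑ b, Qg K P b * Real.log (1 / c) := by
    refine Finset.sum_le_sum fun b _ => ?_
    rcases eq_or_lt_of_le (Qg_nonneg hK0 hP0 b) with h | h
    · rw [← h]; simpa using mul_nonneg le_rfl hlog
    · refine mul_le_mul_of_nonneg_left ?_ h.le
      have hpx := PXg_pos hK0 hP0 h
      refine Real.log_le_log (by positivity) ?_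
      exact one_div_le_one_div_of_le hc0 (le_PXg_of_lb hK0 hP0 hc h)
  calc valg K P ≤ ∑ b, Qg K P b * Real.log (1 / c) := this
    _ = Real.log (1 / c) := by rw [← Finset.sum_mul, sum_Qg hK1, hP1, one_mul]

end Generic
section Moments

variable {ι B : Type*} [Fintype ι] [Fintype B] [DecidableEq ι]

lemma prod_pos_iff_of_nonneg {f : ι → ℝ} (hf : ∀ i, 0 ≤ f i) :
    0 < ∏ i, f i ↔ ∀ i, 0 < f i := by
  constructor
  · intro h i
    rcases lt_or_eq_of_le (hf i) with hi | hi
    · exact hi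
    · exfalso
      rw [Finset.prod_eq_zero (Finset.mem_univ i) hi.symm] at h
      exact lt_irrefl 0 h
  · intro h
    exact Finset.prod_pos fun i _ => h i

lemma exp_one (Q : B → ℝ) (hQ1 : ∑ b, Q b = 1) (i : ι) (f : B → ℝ) :
    ∑ y : ι → B, (∏ l, Q (y l)) * f (y i) = ∑ b, Q b * f b := by
  have key : ∀ y : ι → B, (∏ l, Q (y l)) * f (y i)
      = ∏ l, (Q (y l) * if l = i then f (y l) else 1) := by
    intro y
    rw [Finset.prod_mul_distrib, Finset.prod_ite_eq' Finset.univ i (fun l => f (y l))]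
    simp
  simp only [key]
  have : ∀ y : ι → B, (∏ l, (Q (y l) * if l = i then f (y l) else 1))
      = ∏ l, (fun l b => Q b * if l = i then f b else 1) l (y l) := fun y => rfl
  simp only [this]
  rw [← Fintype.piFinset_univ, ← Finset.prod_univ_sum (t := fun _ => Finset.univ)
      (f := fun l b => Q b * if l = i then f b else 1)]
  have : ∀ l : ι, (∑ b, (Q b * if l = i then f b else 1))
      = if l = i then ∑ b, Q b * f b else 1 := by
    intro l
    split_ifs with h <;> simp [h, hQ1]
  rw [Finset.prod_congr rfl (fun l _ => this l),
    Finset.prod_ite_eq' Finset.univ i (fun _ => ∑ b, Q b * f b)]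
  simp

lemma exp_two (Q : B → ℝ) (hQ1 : ∑ b, Q b = 1) {i j : ι} (hij : i ≠ j) (f g : B → ℝ) :
    ∑ y : ι → B, (∏ l, Q (y l)) * (f (y i) * g (y j))
      = (∑ b, Q b * f b) * (∑ b, Q b * g b) := by
  have key : ∀ y : ι → B, (∏ l, Q (y l)) * (f (y i) * g (y j))
      = ∏ l, (Q (y l) * ((if l = i then f (y l) else 1) * (if l = j then g (y l) else 1))) := by
    intro y
    simp only [Finset.prod_mul_distrib]
    rw [Finset.prod_ite_eq' Finset.univ i (fun l => f (y l)),
      Finset.prod_ite_eq' Finset.univ j (fun l => g (y l))]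
    simp [mul_assoc]
  simp only [key]
  have : ∀ y : ι → B, (∏ l, (Q (y l) * ((if l = i then f (y l) else 1) * (if l = j then g (y l) else 1))))
      = ∏ l, (fun l b => Q b * ((if l = i then f b else 1) * (if l = j then g b else 1))) l (y l) :=
    fun y => rfl
  simp only [this]
  rw [← Fintype.piFinset_univ, ← Finset.prod_univ_sum (t := fun _ => Finset.univ)
      (f := fun l b => Q b * ((if l = i then f b else 1) * if l = j then g b else 1))]
  have : ∀ l : ι, (∑ b, (Q b * ((if l = i then f b else 1) * (if l = j then g b else 1))))
      = (if l = i then ∑ b, Q b * f b else 1) * (if l = j then ∑ b, Q b * g b else 1) := by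
    intro l
    rcases eq_or_ne l i with h | h
    · subst h
      simp [if_neg hij, Finset.mul_sum, mul_comm]
    · rcases eq_or_ne l j with h' | h'
      · subst h'
        simp [if_neg h, hQ1]
      · simp [if_neg h, if_neg h', hQ1]
  rw [Finset.prod_congr rfl (fun l _ => this l), Finset.prod_mul_distrib,
    Finset.prod_ite_eq' Finset.univ i (fun _ => ∑ b, Q b * f b),
    Finset.prod_ite_eq' Finset.univ j (fun _ => ∑ b, Q b * g b)]
  simp

lemma moment_sq (k : ℕ) (Q g : B → ℝ) (hQ1 : ∑ b, Q b = 1)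
    (hmean : ∑ b, Q b * g b = 0) :
    ∑ y : Fin k → B, (∏ l, Q (y l)) * (∑ i, g (y i)) ^ 2
      = k * ∑ b, Q b * g b ^ 2 := by
  have expand : ∀ y : Fin k → B,
      (∏ l, Q (y l)) * (∑ i, g (y i)) ^ 2
        = ∑ i : Fin k, ∑ j : Fin k, (∏ l, Q (y l)) * (g (y i) * g (y j)) := by
    intro y
    rw [sq, Finset.sum_mul_sum]
    rw [Finset.mul_sum]
    refine Finset.sum_congr rfl fun i _ => ?_
    rw [Finset.mul_sum]
  simp only [expand]
  rw [Finset.sum_comm]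
  have key : ∀ i : Fin k, ∑ y : Fin k → B, ∑ j : Fin k, (∏ l, Q (y l)) * (g (y i) * g (y j))
      = ∑ b, Q b * g b ^ 2 := by
    intro i
    rw [Finset.sum_comm]
    have h1 : ∀ j : Fin k, (∑ y : Fin k → B, (∏ l, Q (y l)) * (g (y i) * g (y j)))
        = if j = i then ∑ b, Q b * g b ^ 2 else 0 := by
      intro j
      rcases eq_or_ne j i with h | h
      · subst h
        rw [if_pos rfl]
        have h2 : ∀ y : Fin k → B, (∏ l, Q (y l)) * (g (y j) * g (y j))
            = (∏ l, Q (y l)) * (g (y j)) ^ 2 := by intro y; ring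
        simp only [h2]
        exact exp_one Q hQ1 j (fun b => g b ^ 2)
      · rw [if_neg h, exp_two Q hQ1 (Ne.symm h) g g, hmean, mul_zero]
    rw [Finset.sum_congr rfl (fun j _ => h1 j)]
    simp
  rw [Finset.sum_congr rfl (fun i _ => key i)]
  simp [mul_comm]

lemma cheb (Q : B → ℝ) (hQ0 : ∀ b, 0 ≤ Q b) (f : B → ℝ) {t : ℝ} (ht : 0 < t) :
    ∑ b ∈ Finset.univ.filter (fun b => t ≤ |f b|), Q b
      ≤ (∑ b, Q b * f b ^ 2) / t ^ 2 := by
  rw [le_div_iff₀ (by positivity)]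
  calc (∑ b ∈ Finset.univ.filter (fun b => t ≤ |f b|), Q b) * t ^ 2
      = ∑ b ∈ Finset.univ.filter (fun b => t ≤ |f b|), Q b * t ^ 2 := by
        rw [Finset.sum_mul]
    _ ≤ ∑ b ∈ Finset.univ.filter (fun b => t ≤ |f b|), Q b * f b ^ 2 := by
        refine Finset.sum_le_sum fun b hb => ?_
        have hb' := (Finset.mem_filter.mp hb).2
        have : t ^ 2 ≤ f b ^ 2 := by
          nlinarith [sq_abs (f b), abs_nonneg (f b)]
        exact mul_le_mul_of_nonneg_left this (hQ0 b)
    _ ≤ ∑ b, Q b * f b ^ 2 := by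
        refine Finset.sum_le_sum_of_subset_of_nonneg (Finset.filter_subset _ _)
          (fun b _ _ => mul_nonneg (hQ0 b) (by positivity))

end Moments
section Kfold

variable {A B : Type*} [Fintype A] [Fintype B]

lemma Wn_nonneg {X Y : Type*} (W : X → Y → ℝ) (hW0 : ∀ x y, 0 ≤ W x y) (n : ℕ)
    (x : Fin n → X) (y : Fin n → Y) : 0 ≤ Wn W n x y :=
  Finset.prod_nonneg fun j _ => hW0 _ _

lemma Wn_sum_one {X Y : Type*} [Fintype Y] (W : X → Y → ℝ)
    (hW1 : ∀ x, ∑ y, W x y = 1) (n : ℕ) (x : Fin n → X) :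
    ∑ y : Fin n → Y, Wn W n x y = 1 := by
  unfold Wn
  rw [← Fintype.piFinset_univ, ← Finset.prod_univ_sum (t := fun _ => Finset.univ)
      (f := fun j b => W (x j) b)]
  simp [hW1]

lemma prodP_sum (k : ℕ) (P : A → ℝ) (hP1 : ∑ a, P a = 1) :
    ∑ x : Fin k → A, ∏ i, P (x i) = 1 := by
  rw [← Fintype.piFinset_univ, ← Finset.prod_univ_sum (t := fun _ => Finset.univ)
      (f := fun _ a => P a)]
  simp [hP1]

lemma Qg_Wn (k : ℕ) (K : A → B → ℝ) (P : A → ℝ) (y : Fin k → B) :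
    Qg (Wn K k) (fun x => ∏ i, P (x i)) y = ∏ i, Qg K P (y i) := by
  unfold Qg Wn
  have : ∀ x : Fin k → A, (∏ i, P (x i)) * ∏ j, K (x j) (y j)
      = ∏ i, (fun i a => P a * K a (y i)) i (x i) := by
    intro x
    rw [Finset.prod_mul_distrib]
  simp only [this]
  rw [← Fintype.piFinset_univ, ← Finset.prod_univ_sum (t := fun _ => Finset.univ)
      (f := fun i a => P a * K a (y i))]

lemma PXg_Wn (k : ℕ) (K : A → B → ℝ) (hK0 : ∀ a b, 0 ≤ K a b) (P : A → ℝ)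
    (y : Fin k → B) :
    PXg (Wn K k) (fun x => ∏ i, P (x i)) y = ∏ i, PXg K P (y i) := by
  rw [PXg_eq_sum_ite]
  have : ∀ x : Fin k → A,
      (if 0 < Wn K k x y then ∏ i, P (x i) else 0)
        = ∏ i, (fun i a => if 0 < K a (y i) then P a else 0) i (x i) := by
    intro x
    rw [Fintype.prod_ite_zero]
    congr 1
    · simp only [eq_iff_iff]
      unfold Wn
      rw [prod_pos_iff_of_nonneg (fun j => hK0 _ _)]
  simp only [this]
  rw [← Fintype.piFinset_univ, ← Finset.prod_univ_sum (t := fun _ => Finset.univ)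
      (f := fun i a => if 0 < K a (y i) then P a else 0)]
  refine Finset.prod_congr rfl fun i _ => ?_
  rw [PXg_eq_sum_ite]

end Kfold
section Transport

variable {A B A' B' : Type*} [Fintype A] [Fintype B] [Fintype A'] [Fintype B']
variable {K : A → B → ℝ} {K' : A' → B' → ℝ} (eA : A ≃ A') (eB : B ≃ B')

lemma Qg_transport (h : ∀ a b, K' (eA a) (eB b) = K a b) (P : A → ℝ) (b : B) :
    Qg K' (fun a' => P (eA.symm a')) (eB b) = Qg K P b := by
  unfold Qg
  rw [← Equiv.sum_comp eA (fun a' => P (eA.symm a') * K' a' (eB b))]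
  simp [h]

lemma PXg_transport (h : ∀ a b, K' (eA a) (eB b) = K a b) (P : A → ℝ) (b : B) :
    PXg K' (fun a' => P (eA.symm a')) (eB b) = PXg K P b := by
  rw [PXg_eq_sum_ite, PXg_eq_sum_ite]
  rw [← Equiv.sum_comp eA (fun a' => if 0 < K' a' (eB b) then P (eA.symm a') else 0)]
  simp [h]

lemma valg_transport (h : ∀ a b, K' (eA a) (eB b) = K a b) (P : A → ℝ) :
    valg K' (fun a' => P (eA.symm a')) = valg K P := by
  unfold valg
  rw [← Equiv.sum_comp eB
    (fun b' => Qg K' (fun a' => P (eA.symm a')) b' *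
      Real.log (1 / PXg K' (fun a' => P (eA.symm a')) b'))]
  refine Finset.sum_congr rfl fun b _ => ?_
  rw [Qg_transport eA eB h, PXg_transport eA eB h]

lemma IsUnifPmf_transport {P : A → ℝ} (hP : IsUnifPmf P) :
    IsUnifPmf (fun a' => P (eA.symm a')) := by
  obtain ⟨⟨hP0, hP1⟩, hPu⟩ := hP
  refine ⟨⟨fun a' => hP0 _, ?_⟩, ?_⟩
  · rw [← Equiv.sum_comp eA (fun a' => P (eA.symm a'))]
    simpa using hP1
  · intro a' ha'
    have hcard : (Finset.univ.filter (fun a'' : A' => P (eA.symm a'') ≠ 0)).card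
        = (Finset.univ.filter (fun a : A => P a ≠ 0)).card := by
      refine Finset.card_bij' (fun a'' _ => eA.symm a'') (fun a _ => eA a) ?_ ?_ ?_ ?_
      · intro a'' ha''
        simpa using (Finset.mem_filter.mp ha'').2
      · intro a ha
        simpa using (Finset.mem_filter.mp ha).2
      · intro a'' _; simp
      · intro a _; simp
    rw [hcard]
    exact hPu _ ha'

lemma eraseg_transport (h : ∀ a b, K' (eA a) (eB b) = K a b) {M : ℕ}
    (c : Fin M → A) (m : Fin M) :
    eraseg K' (fun m' => eA (c m')) m = eraseg K c m := by
  unfold eraseg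
  rw [Finset.sum_filter, Finset.sum_filter]
  rw [← Equiv.sum_comp eB (fun b' =>
    if 1 < (Finset.univ.filter (fun m' : Fin M => 0 < K' (eA (c m')) b')).card
    then K' (eA (c m)) b' else 0)]
  refine Finset.sum_congr rfl fun b _ => ?_
  have : (Finset.univ.filter (fun m' : Fin M => 0 < K' (eA (c m')) (eB b)))
      = (Finset.univ.filter (fun m' : Fin M => 0 < K (c m') b)) := by
    refine Finset.filter_congr fun m' _ => ?_
    rw [h]
  rw [this, h]

end Transport

section Prod2

variable {A B C D : Type*} [Fintype A] [Fintype B] [Fintype C] [Fintype D]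
variable (K₁ : A → B → ℝ) (K₂ : C → D → ℝ) (P₁ : A → ℝ) (P₂ : C → ℝ)

/-- Product of two channels. -/
noncomputable def Kprod : A × C → B × D → ℝ := fun a b => K₁ a.1 b.1 * K₂ a.2 b.2

/-- Product of two distributions. -/
noncomputable def Pprod : A × C → ℝ := fun a => P₁ a.1 * P₂ a.2

lemma Qg_prod (b : B) (d : D) :
    Qg (Kprod K₁ K₂) (Pprod P₁ P₂) (b, d) = Qg K₁ P₁ b * Qg K₂ P₂ d := by
  unfold Qg Kprod Pprod
  rw [Fintype.sum_prod_type, Fintype.sum_mul_sum]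
  refine Finset.sum_congr rfl fun a _ => ?_
  refine Finset.sum_congr rfl fun c _ => ?_
  ring

lemma PXg_prod (hK₁ : ∀ a b, 0 ≤ K₁ a b) (hK₂ : ∀ c d, 0 ≤ K₂ c d) (b : B) (d : D) :
    PXg (Kprod K₁ K₂) (Pprod P₁ P₂) (b, d) = PXg K₁ P₁ b * PXg K₂ P₂ d := by
  rw [PXg_eq_sum_ite, PXg_eq_sum_ite, PXg_eq_sum_ite]
  rw [Fintype.sum_prod_type, Fintype.sum_mul_sum]
  refine Finset.sum_congr rfl fun a _ => ?_
  refine Finset.sum_congr rfl fun c _ => ?_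
  unfold Kprod Pprod
  simp only
  rcases lt_or_ge 0 (K₁ a b) with h1 | h1
  · rcases lt_or_ge 0 (K₂ c d) with h2 | h2
    · rw [if_pos h1, if_pos h2, if_pos (mul_pos h1 h2)]
    · have h2' : K₂ c d = 0 := le_antisymm h2 (hK₂ c d)
      rw [if_neg (by simp [h2'])]
      simp [h2']
  · have h1' : K₁ a b = 0 := le_antisymm h1 (hK₁ a b)
    rw [if_neg (by simp [h1'])]
    simp [h1']

lemma valg_prod (hK₁ : ∀ a b, 0 ≤ K₁ a b) (hK₂ : ∀ c d, 0 ≤ K₂ c d)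
    (hK₁1 : ∀ a, ∑ b, K₁ a b = 1) (hK₂1 : ∀ c, ∑ d, K₂ c d = 1)
    (hP₁ : IsPmf P₁) (hP₂ : IsPmf P₂) :
    valg (Kprod K₁ K₂) (Pprod P₁ P₂) = valg K₁ P₁ + valg K₂ P₂ := by
  obtain ⟨h10, h11⟩ := hP₁
  obtain ⟨h20, h21⟩ := hP₂
  unfold valg
  rw [Fintype.sum_prod_type]
  have key : ∀ (b : B) (d : D),
      Qg (Kprod K₁ K₂) (Pprod P₁ P₂) (b, d) *
        Real.log (1 / PXg (Kprod K₁ K₂) (Pprod P₁ P₂) (b, d))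
      = Qg K₁ P₁ b * Qg K₂ P₂ d *
          (Real.log (1 / PXg K₁ P₁ b) + Real.log (1 / PXg K₂ P₂ d)) := by
    intro b d
    rw [Qg_prod, PXg_prod K₁ K₂ P₁ P₂ hK₁ hK₂]
    rcases eq_or_lt_of_le (Qg_nonneg hK₁ h10 b) with hq1 | hq1
    · simp [← hq1]
    · rcases eq_or_lt_of_le (Qg_nonneg hK₂ h20 d) with hq2 | hq2
      · simp [← hq2]
      · have hp1 := PXg_pos hK₁ h10 hq1
        have hp2 := PXg_pos hK₂ h20 hq2
        rw [show (1:ℝ) / (PXg K₁ P₁ b * PXg K₂ P₂ d)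
            = (1 / PXg K₁ P₁ b) * (1 / PXg K₂ P₂ d) by field_simp,
          Real.log_mul (by positivity) (by positivity)]
  simp only [key]
  have expand : ∀ (b : B) (d : D),
      Qg K₁ P₁ b * Qg K₂ P₂ d *
          (Real.log (1 / PXg K₁ P₁ b) + Real.log (1 / PXg K₂ P₂ d))
      = Qg K₂ P₂ d * (Qg K₁ P₁ b * Real.log (1 / PXg K₁ P₁ b))
        + Qg K₁ P₁ b * (Qg K₂ P₂ d * Real.log (1 / PXg K₂ P₂ d)) := by
    intro b d; ring
  simp only [expand, Finset.sum_add_distrib]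
  have e1 : ∑ b, ∑ d, Qg K₂ P₂ d * (Qg K₁ P₁ b * Real.log (1 / PXg K₁ P₁ b))
      = valg K₁ P₁ := by
    have : ∀ b : B, ∑ d, Qg K₂ P₂ d * (Qg K₁ P₁ b * Real.log (1 / PXg K₁ P₁ b))
        = Qg K₁ P₁ b * Real.log (1 / PXg K₁ P₁ b) := by
      intro b
      rw [← Finset.sum_mul, sum_Qg hK₂1, h21, one_mul]
    simp only [this]
    rfl
  have e2 : ∑ b, ∑ d, Qg K₁ P₁ b * (Qg K₂ P₂ d * Real.log (1 / PXg K₂ P₂ d))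
      = valg K₂ P₂ := by
    have : ∀ b : B, ∑ d, Qg K₁ P₁ b * (Qg K₂ P₂ d * Real.log (1 / PXg K₂ P₂ d))
        = Qg K₁ P₁ b * valg K₂ P₂ := by
      intro b
      rw [← Finset.mul_sum]
      rfl
    simp only [this]
    rw [← Finset.sum_mul, sum_Qg hK₁1, h11, one_mul]
  rw [e1, e2]
  rfl

end Prod2
section Prod2b

variable {A C : Type*} [Fintype A] [Fintype C] {P₁ : A → ℝ} {P₂ : C → ℝ}

lemma IsUnifPmf_prod (h₁ : IsUnifPmf P₁) (h₂ : IsUnifPmf P₂) :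
    IsUnifPmf (Pprod P₁ P₂) := by
  obtain ⟨⟨h10, h11⟩, h1u⟩ := h₁
  obtain ⟨⟨h20, h21⟩, h2u⟩ := h₂
  have hfilter : (Finset.univ.filter (fun p : A × C => P₁ p.1 * P₂ p.2 ≠ 0))
      = (Finset.univ.filter (fun a => P₁ a ≠ 0)) ×ˢ
        (Finset.univ.filter (fun c => P₂ c ≠ 0)) := by
    rw [← Finset.univ_product_univ, ← Finset.filter_product]
    refine Finset.filter_congr fun p _ => ?_
    simp [mul_ne_zero_iff]
  refine ⟨⟨fun p => mul_nonneg (h10 p.1) (h20 p.2), ?_⟩, ?_⟩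
  · unfold Pprod
    rw [Fintype.sum_prod_type, ← Fintype.sum_mul_sum, h11, h21, one_mul]
  · intro p hp
    unfold Pprod at hp ⊢
    obtain ⟨hp1, hp2⟩ := mul_ne_zero_iff.mp hp
    rw [h1u p.1 hp1, h2u p.2 hp2, hfilter, Finset.card_product]
    push_cast
    rw [div_mul_div_comm, one_mul]

end Prod2b

section Converse

variable {A B : Type*} [Fintype A] [Fintype B]

lemma eraseg_nonneg {K : A → B → ℝ} (hK0 : ∀ a b, 0 ≤ K a b) {M : ℕ}
    (c : Fin M → A) (m : Fin M) : 0 ≤ eraseg K c m :=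
  Finset.sum_nonneg fun b _ => hK0 _ _

/-- A code with small erasure probability yields a uniform distribution with
large Forney functional. -/
lemma converse_code (K : A → B → ℝ) (hK0 : ∀ a b, 0 ≤ K a b)
    (hK1 : ∀ a, ∑ b, K a b = 1) {M : ℕ} (hM : 1 ≤ M) (c : Fin M → A)
    (hcinj : Function.Injective c) {δ : ℝ}
    (hδ1 : δ ≤ 1) (hc : ∀ m, eraseg K c m < δ) :
    ∃ P : A → ℝ, IsUnifPmf P ∧ (1 - δ) * Real.log M ≤ valg K P := by
  classical
  set S : Finset A := Finset.univ.image c with hS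
  have hScard : S.card = M := by
    rw [hS, Finset.card_image_of_injective _ hcinj, Finset.card_univ, Fintype.card_fin]
  set P : A → ℝ := fun a => if a ∈ S then (M : ℝ)⁻¹ else 0 with hP
  have hM0 : (0:ℝ) < M := by exact_mod_cast hM
  have hP0 : ∀ a, 0 ≤ P a := by
    intro a; rw [hP]; dsimp only; split_ifs
    · positivity
    · exact le_rfl
  have hP1 : ∑ a, P a = 1 := by
    rw [hP]
    rw [Finset.sum_ite_mem, Finset.univ_inter, Finset.sum_const, hScard]
    rw [nsmul_eq_mul]; field_simp
  have hPsupp : ∀ a, P a ≠ 0 ↔ a ∈ S := by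
    intro a; rw [hP]; dsimp only; split_ifs with h
    · simpa [h] using by positivity
    · simp [h]
  have hfilter : Finset.univ.filter (fun a => P a ≠ 0) = S := by
    ext a; simp [hPsupp a]
  have hunif : IsUnifPmf P := by
    refine ⟨⟨hP0, hP1⟩, ?_⟩
    intro a ha
    rw [hfilter, hScard, hP]
    dsimp only
    rw [if_pos ((hPsupp a).mp ha)]
    rw [one_div]
  refine ⟨P, hunif, ?_⟩
  -- the "bad" output set
  set D : Finset B := Finset.univ.filter (fun b : B =>
    1 < (Finset.univ.filter (fun m' : Fin M => 0 < K (c m') b)).card) with hD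
  have hlogM : 0 ≤ Real.log M := Real.log_nonneg (by exact_mod_cast hM)
  -- key: for good outputs, PXg = 1/M
  have hgood : ∀ b ∉ D, 0 < Qg K P b → PXg K P b = (M : ℝ)⁻¹ := by
    intro b hb hq
    obtain ⟨a, hPa, hKa⟩ := exists_of_Qg_pos hK0 hP0 hq
    have haS : a ∈ S := (hPsupp a).mp (ne_of_gt hPa)
    obtain ⟨m, _, hm⟩ := Finset.mem_image.mp haS
    have hcard : (Finset.univ.filter (fun m' : Fin M => 0 < K (c m') b)).card ≤ 1 := by
      by_contra hcon
      exact hb (by rw [hD]; simp only [Finset.mem_filter, Finset.mem_univ, true_and]; omega)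
    have hmem : m ∈ Finset.univ.filter (fun m' : Fin M => 0 < K (c m') b) := by
      simp only [Finset.mem_filter, Finset.mem_univ, true_and]
      rw [hm]; exact hKa
    -- PXg = sum of P over compatible inputs; the only compatible input in S is c m
    have : PXg K P b = ∑ a' ∈ Finset.univ.filter (fun a' => 0 < K a' b), P a' := rfl
    rw [this]
    have hsub : ∀ a' ∈ Finset.univ.filter (fun a' => 0 < K a' b), P a' ≠ 0 → a' = c m := by
      intro a' ha' hPa'
      obtain ⟨m', _, hm'⟩ := Finset.mem_image.mp ((hPsupp a').mp hPa')
      have hm'mem : m' ∈ Finset.univ.filter (fun m'' : Fin M => 0 < K (c m'') b) := by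
        simp only [Finset.mem_filter, Finset.mem_univ, true_and]
        rw [hm']
        exact (Finset.mem_filter.mp ha').2
      have : m' = m := by
        by_contra hne
        have h2 : ({m', m} : Finset (Fin M)) ⊆
            Finset.univ.filter (fun m'' : Fin M => 0 < K (c m'') b) := by
          intro z hz
          rcases Finset.mem_insert.mp hz with h | h
          · subst h; exact hm'mem
          · rw [Finset.mem_singleton.mp h]; exact hmem
        have := Finset.card_le_card h2
        rw [Finset.card_insert_of_notMem (by simp [hne]), Finset.card_singleton] at this
        omega
      rw [← hm', this, hm]
    rw [Finset.sum_eq_single_of_mem (c m) ?_ ?_]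
    · rw [hP]; dsimp only; rw [if_pos (hm ▸ haS)]
    · simp only [Finset.mem_filter, Finset.mem_univ, true_and]
      rw [hm]; exact hKa
    · intro a' ha' hne
      by_contra hP'
      exact hne (hsub a' ha' hP')
  -- lower bound the value
  have hval : valg K P ≥ ∑ b ∈ Finset.univ.filter (fun b => b ∉ D),
      Qg K P b * Real.log M := by
    have h1 : valg K P ≥ ∑ b ∈ Finset.univ.filter (fun b => b ∉ D),
        Qg K P b * Real.log (1 / PXg K P b) := by
      refine Finset.sum_le_sum_of_subset_of_nonneg (Finset.filter_subset _ _) ?_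
      intro b _ _
      exact valg_term_nonneg hK0 hP0 hP1 b
    refine le_trans ?_ h1
    refine Finset.sum_le_sum fun b hb => ?_
    have hbD : b ∉ D := (Finset.mem_filter.mp hb).2
    rcases eq_or_lt_of_le (Qg_nonneg hK0 hP0 b) with hq | hq
    · rw [← hq]; simp
    · rw [hgood b hbD hq]
      rw [one_div, inv_inv]
  -- bound the mass of D
  have hQD : ∑ b ∈ D, Qg K P b < δ := by
    have : ∑ b ∈ D, Qg K P b = (M:ℝ)⁻¹ * ∑ m : Fin M, eraseg K c m := by
      have e1 : ∀ b, Qg K P b = (M:ℝ)⁻¹ * ∑ m : Fin M, K (c m) b := by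
        intro b
        unfold Qg
        rw [hP]
        simp only [ite_mul, zero_mul]
        rw [Finset.sum_ite_mem, Finset.univ_inter, hS,
          Finset.sum_image (fun m _ m' _ h => hcinj h), Finset.mul_sum]
      simp only [e1, ← Finset.mul_sum]
      congr 1
      rw [Finset.sum_comm]
      rfl
    rw [this]
    have hlt : ∑ m : Fin M, eraseg K c m < M * δ := by
      have h1 : ∑ m : Fin M, eraseg K c m < ∑ _m : Fin M, δ :=
        Finset.sum_lt_sum_of_nonempty ⟨⟨0, hM⟩, Finset.mem_univ _⟩ (fun m _ => hc m)
      have h2 : ∑ _m : Fin M, δ = M * δ := by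
        rw [Finset.sum_const, Finset.card_univ, Fintype.card_fin, nsmul_eq_mul]
      linarith
    have hfin : (M:ℝ)⁻¹ * ∑ m : Fin M, eraseg K c m < (M:ℝ)⁻¹ * (M * δ) :=
      mul_lt_mul_of_pos_left hlt (by positivity)
    have heq : (M:ℝ)⁻¹ * (M * δ) = δ := by field_simp
    linarith
  have hsplit : ∑ b ∈ Finset.univ.filter (fun b => b ∉ D), Qg K P b
      = 1 - ∑ b ∈ D, Qg K P b := by
    have hkey := Finset.sum_filter_add_sum_filter_not Finset.univ
      (fun b => b ∈ D) (Qg K P)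
    have hDeq : Finset.univ.filter (fun b => b ∈ D) = D := by
      ext b; simp
    rw [hDeq, sum_Qg hK1, hP1] at hkey
    linarith
  calc (1 - δ) * Real.log M ≤ (1 - ∑ b ∈ D, Qg K P b) * Real.log M := by
        apply mul_le_mul_of_nonneg_right _ hlogM
        linarith
    _ = ∑ b ∈ Finset.univ.filter (fun b => b ∉ D), Qg K P b * Real.log M := by
        rw [← Finset.sum_mul, hsplit]
    _ ≤ valg K P := hval

end Converse
section Achieve

variable {A B : Type*} [Fintype A] [Fintype B] [Nonempty A] [Nonempty B]

set_option maxHeartbeats 1000000 in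
lemma generic_ach (K : A → B → ℝ) (hK0 : ∀ a b, 0 ≤ K a b)
    (hK1 : ∀ a, ∑ b, K a b = 1)
    (P : A → ℝ) (hP0 : ∀ a, 0 ≤ P a) (hP1 : ∑ a, P a = 1)
    {c₀ : ℝ} (hc₀ : 0 < c₀) (hc₁ : c₀ ≤ 1) (hcP : ∀ a, P a ≠ 0 → c₀ ≤ P a)
    {ρ : ℝ} (hρ0 : 0 ≤ ρ) (hρv : ρ < valg K P) {δ : ℝ} (hδ : 0 < δ) :
    ∃ (k M : ℕ) (c : Fin M → (Fin k → A)), 1 ≤ k ∧ Real.exp (k * ρ) ≤ (M:ℝ) ∧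
      ∀ m, eraseg (Wn K k) c m < δ := by
  classical
  set v : ℝ := valg K P with hv
  set α : ℝ := (v - ρ) / 2 with hα
  have hα0 : 0 < α := by rw [hα]; linarith
  have hvρ : v = ρ + 2 * α := by rw [hα]; ring
  set Λ : ℝ := Real.log (1 / c₀) with hΛ
  have hΛ0 : 0 ≤ Λ := Real.log_nonneg (by rw [le_div_iff₀ hc₀]; simpa using hc₁)
  set Z : B → ℝ := fun b => Real.log (1 / PXg K P b) with hZ
  set Q : B → ℝ := fun b => Qg K P b with hQ
  have hQ0 : ∀ b, 0 ≤ Q b := fun b => Qg_nonneg hK0 hP0 b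
  have hQ1 : ∑ b, Q b = 1 := by rw [hQ]; rw [sum_Qg hK1, hP1]
  have hZmean : ∑ b, Q b * Z b = v := rfl
  have hv0 : 0 ≤ v := valg_nonneg hK0 hP0 hP1
  have hvΛ : v ≤ Λ := valg_le hK0 hK1 hP0 hP1 hc₀ hc₁ hcP
  have hZrange : ∀ b, Q b ≠ 0 → 0 ≤ Z b ∧ Z b ≤ Λ := by
    intro b hb
    have hq : 0 < Q b := lt_of_le_of_ne (hQ0 b) (Ne.symm hb)
    have hpx : 0 < PXg K P b := PXg_pos hK0 hP0 hq
    constructor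
    · apply Real.log_nonneg
      rw [le_div_iff₀ hpx]
      simpa using PXg_le_one hP0 hP1 b
    · rw [hZ, hΛ]
      simp only
      rw [Real.log_div one_ne_zero (ne_of_gt hpx), Real.log_div one_ne_zero (ne_of_gt hc₀)]
      have := Real.log_le_log hc₀ (le_PXg_of_lb hK0 hP0 hcP hq)
      linarith
  have hvar : ∑ b, Q b * (Z b - v) ^ 2 ≤ Λ ^ 2 := by
    have : ∀ b, Q b * (Z b - v) ^ 2 ≤ Q b * Λ ^ 2 := by
      intro b
      rcases eq_or_ne (Q b) 0 with h | h
      · simp [h]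
      · refine mul_le_mul_of_nonneg_left ?_ (hQ0 b)
        obtain ⟨h1, h2⟩ := hZrange b h
        nlinarith
    calc ∑ b, Q b * (Z b - v) ^ 2 ≤ ∑ b, Q b * Λ ^ 2 := Finset.sum_le_sum fun b _ => this b
      _ = Λ ^ 2 := by rw [← Finset.sum_mul, hQ1, one_mul]
  -- choose the blocklength k
  obtain ⟨k, hk⟩ := exists_nat_gt (max (max (4 * Λ ^ 2 / (δ * α ^ 2)) (12 / (δ * α))) 1)
  have hk1R : (1:ℝ) < k := lt_of_le_of_lt (le_max_right _ _) hk
  have hk1 : 1 ≤ k := by exact_mod_cast hk1R.le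
  have hk0R : (0:ℝ) < k := by linarith
  have ht1 : Λ ^ 2 / (k * α ^ 2) < δ / 4 := by
    have h1 : 4 * Λ ^ 2 / (δ * α ^ 2) < k := lt_of_le_of_lt
      ((le_max_left _ _).trans (le_max_left _ _)) hk
    rw [div_lt_iff₀ (by positivity)] at h1 ⊢
    nlinarith
  have ht2 : 3 * Real.exp (-(k * α)) < δ / 4 := by
    have h1 : 12 / (δ * α) < k := lt_of_le_of_lt
      ((le_max_right _ _).trans (le_max_left _ _)) hk
    have h2 : Real.exp (-(k * α)) ≤ 1 / (k * α) := by
      rw [Real.exp_neg]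
      rw [inv_eq_one_div, div_le_div_iff₀ (Real.exp_pos _) (by positivity)]
      have := Real.add_one_le_exp (k * α)
      nlinarith [Real.exp_pos (k * α)]
    have h3 : 12 < k * (δ * α) := by
      rw [div_lt_iff₀ (by positivity)] at h1
      linarith
    calc 3 * Real.exp (-(k * α)) ≤ 3 * (1 / (k * α)) := by linarith
      _ < δ / 4 := by
        rw [mul_one_div, div_lt_div_iff₀ (by positivity) (by norm_num)]
        nlinarith
  -- the codebook size
  set M₀ : ℕ := ⌈Real.exp (k * ρ)⌉₊ with hM₀def
  have hM₀ : Real.exp (k * ρ) ≤ M₀ := Nat.le_ceil _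
  have hexp1 : (1:ℝ) ≤ Real.exp (k * ρ) := by
    rw [Real.one_le_exp_iff]
    positivity
  have hM₀1 : 1 ≤ M₀ := by
    by_contra h
    push_neg at h
    interval_cases M₀
    · simp at hM₀; linarith
  set M : ℕ := 2 * M₀ with hMdef
  have hM2 : 2 ≤ M := by omega
  have hMub : (M:ℝ) - 1 ≤ 3 * Real.exp (k * ρ) := by
    have h1 : (M₀ : ℝ) < Real.exp (k * ρ) + 1 := Nat.ceil_lt_add_one (by positivity)
    have : (M:ℝ) = 2 * (M₀:ℝ) := by rw [hMdef]; push_cast; ring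
    rw [this]
    nlinarith
  -- product objects at blocklength k
  set Pk : (Fin k → A) → ℝ := fun x => ∏ i, P (x i) with hPkdef
  set Kk : (Fin k → A) → (Fin k → B) → ℝ := Wn K k with hKkdef
  have hKk0 : ∀ x y, 0 ≤ Kk x y := fun x y => Wn_nonneg K hK0 k x y
  have hKk1 : ∀ x, ∑ y, Kk x y = 1 := fun x => Wn_sum_one K hK1 k x
  have hPk0 : ∀ x, 0 ≤ Pk x := fun x => Finset.prod_nonneg fun i _ => hP0 _
  have hPk1 : ∑ x, Pk x = 1 := prodP_sum k P hP1
  have hQk : ∀ y, Qg Kk Pk y = ∏ i, Q (y i) := fun y => Qg_Wn k K P y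
  have hPXk : ∀ y, PXg Kk Pk y = ∏ i, PXg K P (y i) := fun y => PXg_Wn k K hK0 P y
  have hQk0 : ∀ y, 0 ≤ Qg Kk Pk y := fun y => Qg_nonneg hKk0 hPk0 y
  have hQk1 : ∑ y, Qg Kk Pk y = 1 := by rw [sum_Qg hKk1, hPk1]
  set ε : ℝ := Real.exp (-(k * (ρ + α))) with hεdef
  have hε0 : 0 < ε := Real.exp_pos _
  -- the atypical output set and its Chebyshev bound
  set Bd : Finset (Fin k → B) :=
    Finset.univ.filter (fun y => ¬ PXg Kk Pk y ≤ ε) with hBddef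
  have hcheb : ∑ y ∈ Bd, Qg Kk Pk y ≤ Λ ^ 2 / (k * α ^ 2) := by
    set f : (Fin k → B) → ℝ := fun y => (∑ i, Z (y i)) - k * v with hfdef
    have hsubset : ∀ y, y ∈ Bd → Qg Kk Pk y ≠ 0 → k * α ≤ |f y| := by
      intro y hy hQky
      have hach : ∀ i, Q (y i) ≠ 0 := by
        intro i
        rw [hQk y] at hQky
        exact fun h => hQky (Finset.prod_eq_zero (Finset.mem_univ i) h)
      have hpx : ∀ i, 0 < PXg K P (y i) := fun i =>
        PXg_pos hK0 hP0 (lt_of_le_of_ne (hQ0 (y i)) (Ne.symm (hach i)))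
      have hPXexp : PXg Kk Pk y = Real.exp (-(∑ i, Z (y i))) := by
        rw [hPXk y]
        have hfac : ∀ i, PXg K P (y i) = Real.exp (-(Z (y i))) := by
          intro i
          rw [hZ]
          simp only
          rw [one_div, Real.log_inv, neg_neg, Real.exp_log (hpx i)]
        rw [Finset.prod_congr rfl fun i _ => hfac i, ← Real.exp_sum]
        congr 1
        rw [Finset.sum_neg_distrib]
      have hyBd : ¬ PXg Kk Pk y ≤ ε := (Finset.mem_filter.mp hy).2
      rw [hPXexp, hεdef] at hyBd
      push_neg at hyBd
      rw [Real.exp_lt_exp] at hyBd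
      have hZsum : ∑ i, Z (y i) < k * (ρ + α) := by linarith
      have hfy : f y < -(k * α) := by
        rw [hfdef]
        simp only
        rw [hvρ]
        nlinarith
      have h1 : k * α ≤ -(f y) := by linarith
      exact h1.trans (neg_le_abs (f y))
    have hstep : ∑ y ∈ Bd, Qg Kk Pk y
        ≤ ∑ y ∈ Finset.univ.filter (fun y => k * α ≤ |f y|), Qg Kk Pk y := by
      rw [← Finset.sum_filter_ne_zero Bd]
      refine Finset.sum_le_sum_of_subset_of_nonneg ?_ (fun y _ _ => hQk0 y)
      intro y hy
      obtain ⟨hy1, hy2⟩ := Finset.mem_filter.mp hy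
      simp only [Finset.mem_filter, Finset.mem_univ, true_and]
      exact hsubset y hy1 hy2
    have hchb := cheb (Qg Kk Pk) hQk0 f (t := k * α) (by positivity)
    have hmom : ∑ y, Qg Kk Pk y * f y ^ 2 ≤ k * Λ ^ 2 := by
      have e1 : ∀ y : Fin k → B, Qg Kk Pk y * f y ^ 2
          = (∏ l, Q (y l)) * (∑ i, (fun b => Z b - v) (y i)) ^ 2 := by
        intro y
        rw [hQk y, hfdef]
        simp only
        congr 2
        rw [Finset.sum_sub_distrib, Finset.sum_const, Finset.card_univ,
          Fintype.card_fin, nsmul_eq_mul]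
      rw [Finset.sum_congr rfl fun y _ => e1 y]
      rw [moment_sq k Q (fun b => Z b - v) hQ1 (by
        rw [Finset.sum_congr rfl (fun b _ => by ring :
          ∀ b ∈ Finset.univ, Q b * (Z b - v) = Q b * Z b - Q b * v)]
        rw [Finset.sum_sub_distrib, hZmean, ← Finset.sum_mul, hQ1, one_mul, sub_self])]
      have := hvar
      nlinarith [hk0R]
    calc ∑ y ∈ Bd, Qg Kk Pk y
        ≤ ∑ y ∈ Finset.univ.filter (fun y => k * α ≤ |f y|), Qg Kk Pk y := hstep
      _ ≤ (∑ y, Qg Kk Pk y * f y ^ 2) / (k * α) ^ 2 := hchb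
      _ ≤ k * Λ ^ 2 / (k * α) ^ 2 := by
          apply div_le_div_of_nonneg_right hmom (by positivity) |>.trans_eq rfl
      _ = Λ ^ 2 / (k * α ^ 2) := by
          field_simp
  -- the typical output set and the random-coding bound
  set QBd : ℝ := ∑ y ∈ Bd, Qg Kk Pk y with hQBddef
  have hQBd0 : 0 ≤ QBd := Finset.sum_nonneg fun y _ => hQk0 y
  set Gd : Finset (Fin k → B) :=
    Finset.univ.filter (fun y => PXg Kk Pk y ≤ ε) with hGddef
  set ind : (Fin k → A) → (Fin k → B) → ℝ :=
    fun x y => if 0 < Kk x y then 1 else 0 with hinddef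
  have hind0 : ∀ x y, 0 ≤ ind x y := by
    intro x y; rw [hinddef]; dsimp only; split_ifs <;> norm_num
  have hindPX : ∀ y, ∑ x, Pk x * ind x y = PXg Kk Pk y := by
    intro y
    rw [PXg_eq_sum_ite]
    refine Finset.sum_congr rfl fun x _ => ?_
    rw [hinddef]; dsimp only; split_ifs <;> simp
  -- pointwise bound on the erasure probability of a random codebook
  have hboundC : ∀ (C : Fin M → (Fin k → A)) (m : Fin M),
      eraseg Kk C m ≤ (∑ y ∈ Bd, Kk (C m) y)
        + ∑ y ∈ Gd, Kk (C m) y * (∑ m' ∈ Finset.univ.erase m, ind (C m') y) := by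
    intro C m
    have heq : eraseg Kk C m = ∑ y ∈ Finset.univ.filter (fun y =>
        1 < (Finset.univ.filter (fun m' : Fin M => 0 < Kk (C m') y)).card),
        Kk (C m) y := rfl
    set D : Finset (Fin k → B) := Finset.univ.filter (fun y =>
      1 < (Finset.univ.filter (fun m' : Fin M => 0 < Kk (C m') y)).card) with hDdef
    rw [heq, ← Finset.sum_filter_add_sum_filter_not D (fun y => PXg Kk Pk y ≤ ε)]
    have hterm2 : ∑ y ∈ D.filter (fun y => ¬ PXg Kk Pk y ≤ ε), Kk (C m) y
        ≤ ∑ y ∈ Bd, Kk (C m) y := by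
      refine Finset.sum_le_sum_of_subset_of_nonneg ?_ (fun y _ _ => hKk0 _ _)
      rw [hBddef]
      exact Finset.filter_subset_filter _ (Finset.subset_univ D)
    have hterm1 : ∑ y ∈ D.filter (fun y => PXg Kk Pk y ≤ ε), Kk (C m) y
        ≤ ∑ y ∈ Gd, Kk (C m) y * (∑ m' ∈ Finset.univ.erase m, ind (C m') y) := by
      have step1 : ∑ y ∈ D.filter (fun y => PXg Kk Pk y ≤ ε), Kk (C m) y
          ≤ ∑ y ∈ D.filter (fun y => PXg Kk Pk y ≤ ε),
              Kk (C m) y * (∑ m' ∈ Finset.univ.erase m, ind (C m') y) := by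
        refine Finset.sum_le_sum fun y hy => ?_
        rcases eq_or_lt_of_le (hKk0 (C m) y) with h0 | h0
        · rw [← h0, zero_mul]
        · have hyD : y ∈ D := Finset.mem_of_mem_filter y hy
          have hcard : 1 < (Finset.univ.filter
              (fun m' : Fin M => 0 < Kk (C m') y)).card :=
            (Finset.mem_filter.mp hyD).2
          obtain ⟨m'', hm''mem, hm''ne⟩ := Finset.exists_mem_ne hcard m
          have hS1 : (1:ℝ) ≤ ∑ m' ∈ Finset.univ.erase m, ind (C m') y := by
            have hmem : m'' ∈ Finset.univ.erase m :=
              Finset.mem_erase.mpr ⟨hm''ne, Finset.mem_univ _⟩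
            have hone : ind (C m'') y = 1 := by
              rw [hinddef]; dsimp only
              rw [if_pos (Finset.mem_filter.mp hm''mem).2]
            calc (1:ℝ) = ind (C m'') y := hone.symm
              _ ≤ ∑ m' ∈ Finset.univ.erase m, ind (C m') y :=
                Finset.single_le_sum (fun m' _ => hind0 _ _) hmem
          exact le_mul_of_one_le_right h0.le hS1
      refine step1.trans (Finset.sum_le_sum_of_subset_of_nonneg ?_ ?_)
      · rw [hGddef]
        exact Finset.filter_subset_filter _ (Finset.subset_univ D)
      · intro y _ _
        exact mul_nonneg (hKk0 _ _) (Finset.sum_nonneg fun m' _ => hind0 _ _)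
    linarith [hterm1, hterm2]
  -- expectation over random codebooks
  have hw0 : ∀ C : Fin M → (Fin k → A), 0 ≤ ∏ m', Pk (C m') :=
    fun C => Finset.prod_nonneg fun m' _ => hPk0 _
  have hw1 : ∑ C : Fin M → (Fin k → A), ∏ m', Pk (C m') = 1 := prodP_sum M Pk hPk1
  have hEm : ∀ m : Fin M,
      ∑ C : Fin M → (Fin k → A), (∏ m', Pk (C m')) * eraseg Kk C m
        ≤ QBd + ((M:ℝ) - 1) * ε := by
    intro m
    have hmono : ∑ C : Fin M → (Fin k → A), (∏ m', Pk (C m')) * eraseg Kk C m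
        ≤ ∑ C : Fin M → (Fin k → A), (∏ m', Pk (C m')) *
            ((∑ y ∈ Bd, Kk (C m) y)
              + ∑ y ∈ Gd, Kk (C m) y * (∑ m' ∈ Finset.univ.erase m, ind (C m') y)) :=
      Finset.sum_le_sum fun C _ => mul_le_mul_of_nonneg_left (hboundC C m) (hw0 C)
    have hT1 : ∑ C : Fin M → (Fin k → A), (∏ m', Pk (C m')) * (∑ y ∈ Bd, Kk (C m) y)
        = QBd := by
      have e1 : ∀ C : Fin M → (Fin k → A),
          (∏ m', Pk (C m')) * (∑ y ∈ Bd, Kk (C m) y)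
            = ∑ y ∈ Bd, (∏ m', Pk (C m')) * Kk (C m) y :=
        fun C => Finset.mul_sum _ _ _
      simp only [e1]
      rw [Finset.sum_comm]
      rw [hQBddef]
      refine Finset.sum_congr rfl fun y _ => ?_
      exact exp_one Pk hPk1 m (fun x => Kk x y)
    have hT2 : ∑ C : Fin M → (Fin k → A), (∏ m', Pk (C m')) *
          (∑ y ∈ Gd, Kk (C m) y * (∑ m' ∈ Finset.univ.erase m, ind (C m') y))
        ≤ ((M:ℝ) - 1) * ε := by
      have e1 : ∀ C : Fin M → (Fin k → A),
          (∏ m'', Pk (C m'')) *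
            (∑ y ∈ Gd, Kk (C m) y * (∑ m' ∈ Finset.univ.erase m, ind (C m') y))
          = ∑ y ∈ Gd, ∑ m' ∈ Finset.univ.erase m,
              (∏ m'', Pk (C m'')) * (Kk (C m) y * ind (C m') y) := by
        intro C
        rw [Finset.mul_sum]
        refine Finset.sum_congr rfl fun y _ => ?_
        rw [Finset.mul_sum, Finset.mul_sum]
      simp only [e1]
      rw [Finset.sum_comm]
      have e2 : ∀ y ∈ Gd, ∑ m' ∈ Finset.univ.erase m,
          (∑ C : Fin M → (Fin k → A), (∏ m'', Pk (C m'')) * (Kk (C m) y * ind (C m') y))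
          = ((M:ℝ) - 1) * (Qg Kk Pk y * PXg Kk Pk y) := by
        intro y _
        have e3 : ∀ m' ∈ Finset.univ.erase m,
            (∑ C : Fin M → (Fin k → A), (∏ m'', Pk (C m'')) * (Kk (C m) y * ind (C m') y))
            = Qg Kk Pk y * PXg Kk Pk y := by
          intro m' hm'
          rw [exp_two Pk hPk1 (Ne.symm (Finset.mem_erase.mp hm').1)
            (fun x => Kk x y) (fun x => ind x y)]
          rw [hindPX y]
          rfl
        rw [Finset.sum_congr rfl e3, Finset.sum_const, Finset.card_erase_of_mem
          (Finset.mem_univ m), Finset.card_univ, Fintype.card_fin, nsmul_eq_mul]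
        rw [Nat.cast_sub (by omega : 1 ≤ M)]
        norm_num
      have hswap : ∀ y ∈ Gd, ∑ C : Fin M → (Fin k → A), ∑ m' ∈ Finset.univ.erase m,
          (∏ m'', Pk (C m'')) * (Kk (C m) y * ind (C m') y)
          = ∑ m' ∈ Finset.univ.erase m, ∑ C : Fin M → (Fin k → A),
              (∏ m'', Pk (C m'')) * (Kk (C m) y * ind (C m') y) :=
        fun y _ => Finset.sum_comm
      calc ∑ y ∈ Gd, ∑ C : Fin M → (Fin k → A), ∑ m' ∈ Finset.univ.erase m,
            (∏ m'', Pk (C m'')) * (Kk (C m) y * ind (C m') y)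
          = ∑ y ∈ Gd, ((M:ℝ) - 1) * (Qg Kk Pk y * PXg Kk Pk y) := by
            refine Finset.sum_congr rfl fun y hy => ?_
            rw [hswap y hy, e2 y hy]
        _ ≤ ∑ y ∈ Gd, ((M:ℝ) - 1) * (Qg Kk Pk y * ε) := by
            refine Finset.sum_le_sum fun y hy => ?_
            have hyGd : PXg Kk Pk y ≤ ε := (Finset.mem_filter.mp hy).2
            have hM1 : (0:ℝ) ≤ (M:ℝ) - 1 := by
              have : (1:ℝ) ≤ M := by exact_mod_cast (by omega : 1 ≤ M)
              linarith
            exact mul_le_mul_of_nonneg_left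
              (mul_le_mul_of_nonneg_left hyGd (hQk0 y)) hM1
        _ ≤ ((M:ℝ) - 1) * ε := by
            have hM1 : (0:ℝ) ≤ (M:ℝ) - 1 := by
              have : (1:ℝ) ≤ M := by exact_mod_cast (by omega : 1 ≤ M)
              linarith
            have hGd1 : ∑ y ∈ Gd, Qg Kk Pk y ≤ 1 := by
              rw [← hQk1]
              exact Finset.sum_le_sum_of_subset_of_nonneg (Finset.subset_univ Gd)
                (fun y _ _ => hQk0 y)
            have : ∑ y ∈ Gd, ((M:ℝ) - 1) * (Qg Kk Pk y * ε)
                = (((M:ℝ) - 1) * ε) * ∑ y ∈ Gd, Qg Kk Pk y := by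
              rw [Finset.mul_sum]
              refine Finset.sum_congr rfl fun y _ => ?_
              ring
            rw [this]
            have hsnn : (0:ℝ) ≤ ∑ y ∈ Gd, Qg Kk Pk y :=
              Finset.sum_nonneg fun y _ => hQk0 y
            nlinarith [mul_nonneg hM1 hε0.le]
    have hsplit : ∑ C : Fin M → (Fin k → A), (∏ m', Pk (C m')) *
          ((∑ y ∈ Bd, Kk (C m) y)
            + ∑ y ∈ Gd, Kk (C m) y * (∑ m' ∈ Finset.univ.erase m, ind (C m') y))
        = (∑ C : Fin M → (Fin k → A), (∏ m', Pk (C m')) * (∑ y ∈ Bd, Kk (C m) y))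
          + ∑ C : Fin M → (Fin k → A), (∏ m', Pk (C m')) *
              (∑ y ∈ Gd, Kk (C m) y * (∑ m' ∈ Finset.univ.erase m, ind (C m') y)) := by
      rw [← Finset.sum_add_distrib]
      refine Finset.sum_congr rfl fun C _ => ?_
      ring
    rw [hsplit, hT1] at hmono
    linarith [hT2, hmono]
  -- bound on the random-coding error
  set β : ℝ := QBd + ((M:ℝ) - 1) * ε with hβdef
  have hβδ : β < δ / 2 := by
    have h2 : ((M:ℝ) - 1) * ε ≤ 3 * Real.exp (-(k * α)) := by
      have hstep : ((M:ℝ) - 1) * ε ≤ (3 * Real.exp (k * ρ)) * ε :=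
        mul_le_mul_of_nonneg_right hMub hε0.le
      have heq : (3 * Real.exp (k * ρ)) * ε = 3 * Real.exp (-(k * α)) := by
        rw [hεdef, mul_assoc, ← Real.exp_add]
        congr 2
        ring
      linarith
    have h1 : QBd ≤ Λ ^ 2 / (k * α ^ 2) := hcheb
    linarith
  -- a good codebook exists
  have hexists : ∃ C : Fin M → (Fin k → A), ∑ m, eraseg Kk C m ≤ M * β := by
    by_contra hcon
    push_neg at hcon
    have hwne : ∑ C : Fin M → (Fin k → A), ∏ m', Pk (C m') ≠ 0 := by
      rw [hw1]; norm_num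
    obtain ⟨C₀, _, hC₀⟩ := Finset.exists_ne_zero_of_sum_ne_zero hwne
    have hEsum : ∑ C : Fin M → (Fin k → A), (∏ m', Pk (C m')) * (∑ m, eraseg Kk C m)
        ≤ (M:ℝ) * β := by
      have e1 : ∀ C : Fin M → (Fin k → A),
          (∏ m', Pk (C m')) * (∑ m, eraseg Kk C m)
            = ∑ m, (∏ m', Pk (C m')) * eraseg Kk C m :=
        fun C => Finset.mul_sum _ _ _
      simp only [e1]
      rw [Finset.sum_comm]
      calc ∑ m : Fin M, ∑ C : Fin M → (Fin k → A), (∏ m', Pk (C m')) * eraseg Kk C m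
          ≤ ∑ _m : Fin M, (QBd + ((M:ℝ) - 1) * ε) := Finset.sum_le_sum fun m _ => hEm m
        _ = (M:ℝ) * β := by
            rw [Finset.sum_const, Finset.card_univ, Fintype.card_fin, nsmul_eq_mul,
              hβdef]
    have hlt : ∑ C : Fin M → (Fin k → A), (∏ m', Pk (C m')) * ((M:ℝ) * β)
        < ∑ C : Fin M → (Fin k → A), (∏ m', Pk (C m')) * (∑ m, eraseg Kk C m) := by
      refine Finset.sum_lt_sum
        (fun C _ => mul_le_mul_of_nonneg_left (hcon C).le (hw0 C))
        ⟨C₀, Finset.mem_univ _, ?_⟩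
      exact mul_lt_mul_of_pos_left (hcon C₀) (lt_of_le_of_ne (hw0 C₀) (Ne.symm hC₀))
    rw [← Finset.sum_mul, hw1, one_mul] at hlt
    linarith
  obtain ⟨C₀, hC₀⟩ := hexists
  -- expurgation
  set G : Finset (Fin M) := Finset.univ.filter (fun m => eraseg Kk C₀ m < δ) with hGdef
  have hGcard : M₀ < G.card := by
    set Bad : Finset (Fin M) :=
      Finset.univ.filter (fun m => ¬ eraseg Kk C₀ m < δ) with hBaddef
    have hBadbound : (Bad.card : ℝ) * δ ≤ (M:ℝ) * β := by
      calc (Bad.card:ℝ) * δ = ∑ _m ∈ Bad, δ := by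
            rw [Finset.sum_const, nsmul_eq_mul]
        _ ≤ ∑ m ∈ Bad, eraseg Kk C₀ m :=
            Finset.sum_le_sum fun m hm => not_lt.mp (Finset.mem_filter.mp hm).2
        _ ≤ ∑ m, eraseg Kk C₀ m :=
            Finset.sum_le_sum_of_subset_of_nonneg (Finset.subset_univ Bad)
              (fun m _ _ => eraseg_nonneg hKk0 C₀ m)
        _ ≤ (M:ℝ) * β := hC₀
    have hMpos : (0:ℝ) < M := by
      have : (2:ℝ) ≤ M := by exact_mod_cast hM2
      linarith
    have hBadlt : (Bad.card:ℝ) < M₀ := by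
      have h1 : (M:ℝ) * β < (M:ℝ) * (δ/2) := mul_lt_mul_of_pos_left hβδ hMpos
      have h2 : (M:ℝ) * (δ/2) = (M₀:ℝ) * δ := by
        rw [hMdef]; push_cast; ring
      have h3 : (Bad.card:ℝ) * δ < (M₀:ℝ) * δ :=
        lt_of_le_of_lt hBadbound (h1.trans_eq h2)
      exact lt_of_mul_lt_mul_right h3 hδ.le
    have hBadnat : Bad.card < M₀ := by exact_mod_cast hBadlt
    have hsum : G.card + Bad.card = M := by
      rw [hGdef, hBaddef]
      rw [Finset.card_filter_add_card_filter_not]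
      rw [Finset.card_univ, Fintype.card_fin]
    omega
  -- the expurgated codebook
  refine ⟨k, G.card, fun i => C₀ ((G.orderIsoOfFin rfl i) : Fin M), hk1, ?_, ?_⟩
  · calc Real.exp (k * ρ) ≤ M₀ := hM₀
      _ ≤ (G.card:ℝ) := by exact_mod_cast hGcard.le
  · intro i
    set ι : Fin G.card → Fin M := fun j => ((G.orderIsoOfFin rfl j) : Fin M) with hι
    have hιinj : Function.Injective ι := fun a b h =>
      (G.orderIsoOfFin rfl).injective (Subtype.ext h)
    have hιG : ∀ j, ι j ∈ G := fun j => (G.orderIsoOfFin rfl j).2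
    have hmono : eraseg Kk (fun j => C₀ (ι j)) i ≤ eraseg Kk C₀ (ι i) := by
      unfold eraseg
      refine Finset.sum_le_sum_of_subset_of_nonneg ?_ (fun y _ _ => hKk0 _ _)
      intro y hy
      simp only [Finset.mem_filter, Finset.mem_univ, true_and] at hy ⊢
      have hcardle : (Finset.univ.filter (fun j : Fin G.card => 0 < Kk (C₀ (ι j)) y)).card
          ≤ (Finset.univ.filter (fun m'' : Fin M => 0 < Kk (C₀ m'') y)).card := by
        refine Finset.card_le_card_of_injOn ι ?_ (fun a _ b _ h => hιinj h)
        intro j hj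
        simpa using hj
      omega
    have hlt : eraseg Kk C₀ (ι i) < δ := (Finset.mem_filter.mp (hιG i)).2
    exact lt_of_le_of_lt hmono hlt

end Achieve
section ForneyLemmas

variable {X Y : Type*} [Fintype X] [Fintype Y]

/-- The defining set of `forneyN`, described via the generic notions. -/
def FSet (W : X → Y → ℝ) (n : ℕ) : Set ℝ :=
  {v : ℝ | ∃ P : (Fin n → X) → ℝ, IsUnifPmf P ∧ v = valg (Wn W n) P}

lemma forneyN_eq (W : X → Y → ℝ) (n : ℕ) : forneyN W n = sSup (FSet W n) := by
  unfold forneyN FSet IsUnifPmf IsPmf valg Qg PXg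
  congr 1
  ext v
  constructor
  · rintro ⟨P, h1, h2, h3, h4⟩
    exact ⟨P, ⟨⟨h1, h2⟩, h3⟩, h4⟩
  · rintro ⟨P, ⟨⟨h1, h2⟩, h3⟩, h4⟩
    exact ⟨P, h1, h2, h3, h4⟩

variable [Nonempty X] [Nonempty Y]

lemma FSet_nonempty (W : X → Y → ℝ) (n : ℕ) : (FSet W n).Nonempty := by
  have hcard : (0:ℝ) < (Fintype.card (Fin n → X) : ℝ) := by
    have : 0 < Fintype.card (Fin n → X) := Fintype.card_pos
    exact_mod_cast this
  refine ⟨valg (Wn W n) (fun _ => (Fintype.card (Fin n → X) : ℝ)⁻¹),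
    ⟨fun _ => (Fintype.card (Fin n → X) : ℝ)⁻¹, ⟨⟨fun _ => by positivity, ?_⟩, ?_⟩, rfl⟩⟩
  · rw [Finset.sum_const, Finset.card_univ, nsmul_eq_mul]
    field_simp
  · intro a _
    have hne : ((Fintype.card (Fin n → X) : ℝ))⁻¹ ≠ 0 := by positivity
    have : Finset.univ.filter
        (fun _ : Fin n → X => ((Fintype.card (Fin n → X) : ℝ))⁻¹ ≠ 0)
        = Finset.univ := by
      ext x; simp [hne]
    rw [this, Finset.card_univ, one_div]

lemma unif_lb {n : ℕ} {P : (Fin n → X) → ℝ} (hP : IsUnifPmf P) :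
    ∃ N : ℕ, 1 ≤ N ∧ N ≤ Fintype.card (Fin n → X) ∧
      (∀ a, P a ≠ 0 → P a = 1 / (N:ℝ)) := by
  obtain ⟨⟨hP0, hP1⟩, hPu⟩ := hP
  refine ⟨(Finset.univ.filter (fun a => P a ≠ 0)).card, ?_, ?_, fun a ha => hPu a ha⟩
  · by_contra h
    push_neg at h
    interval_cases h' : (Finset.univ.filter (fun a => P a ≠ 0)).card
    have hall : ∀ a, P a = 0 := by
      intro a
      by_contra ha
      have : a ∈ Finset.univ.filter (fun a => P a ≠ 0) := by simp [ha]
      rw [Finset.card_eq_zero.mp h'] at this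
      simp at this
    rw [Finset.sum_congr rfl (fun a _ => hall a)] at hP1
    simp at hP1
  · exact le_trans (Finset.card_le_card (Finset.subset_univ _))
      (le_of_eq (Finset.card_univ))

lemma FSet_le (W : X → Y → ℝ) (hW0 : ∀ x y, 0 ≤ W x y) (hW1 : ∀ x, ∑ y, W x y = 1)
    (n : ℕ) : ∀ v ∈ FSet W n, v ≤ n * Real.log (Fintype.card X) := by
  rintro v ⟨P, hP, rfl⟩
  obtain ⟨N, hN1, hNle, hPN⟩ := unif_lb hP
  obtain ⟨⟨hP0, hP1⟩, _⟩ := hP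
  have hN0 : (0:ℝ) < N := by exact_mod_cast hN1
  have hc1 : (1:ℝ)/N ≤ 1 := by
    rw [div_le_one hN0]
    exact_mod_cast hN1
  have hval := valg_le (Wn_nonneg W hW0 n) (Wn_sum_one W hW1 n) hP0 hP1
    (c := 1/(N:ℝ)) (by positivity) hc1 (fun a ha => le_of_eq (hPN a ha).symm)
  have hlogsimp : Real.log (1 / (1 / (N:ℝ))) = Real.log N := by
    rw [one_div_one_div]
  rw [hlogsimp] at hval
  refine hval.trans ?_
  have hcard : (Fintype.card (Fin n → X) : ℝ) = (Fintype.card X : ℝ) ^ n := by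
    rw [Fintype.card_fun]
    push_cast
    simp [Fintype.card_fin]
  calc Real.log N ≤ Real.log ((Fintype.card X : ℝ) ^ n) := by
        refine Real.log_le_log hN0 ?_
        rw [← hcard]
        exact_mod_cast hNle
    _ = n * Real.log (Fintype.card X) := by rw [Real.log_pow]

lemma FSet_bddAbove (W : X → Y → ℝ) (hW0 : ∀ x y, 0 ≤ W x y)
    (hW1 : ∀ x, ∑ y, W x y = 1) (n : ℕ) : BddAbove (FSet W n) :=
  ⟨n * Real.log (Fintype.card X), fun v hv => FSet_le W hW0 hW1 n v hv⟩

lemma forneyN_nonneg (W : X → Y → ℝ) (hW0 : ∀ x y, 0 ≤ W x y)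
    (hW1 : ∀ x, ∑ y, W x y = 1) (n : ℕ) : 0 ≤ forneyN W n := by
  rw [forneyN_eq]
  obtain ⟨v, P, hP, hv⟩ := FSet_nonempty W n
  have hv0 : 0 ≤ v := hv ▸ valg_nonneg (Wn_nonneg W hW0 n) hP.1.1 hP.1.2
  exact hv0.trans (le_csSup (FSet_bddAbove W hW0 hW1 n) ⟨P, hP, hv⟩)

lemma forneyN_le (W : X → Y → ℝ) (hW0 : ∀ x y, 0 ≤ W x y)
    (hW1 : ∀ x, ∑ y, W x y = 1) (n : ℕ) :
    forneyN W n ≤ n * Real.log (Fintype.card X) := by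
  rw [forneyN_eq]
  exact csSup_le (FSet_nonempty W n) (FSet_le W hW0 hW1 n)

/-- Splitting equivalence for words. -/
def splitEquiv (X : Type*) (a b : ℕ) : ((Fin a → X) × (Fin b → X)) ≃ (Fin (a+b) → X) :=
  (Equiv.sumArrowEquivProdArrow (Fin a) (Fin b) X).symm.trans
    (Equiv.arrowCongr finSumFinEquiv (Equiv.refl X))

lemma splitEquiv_apply {X : Type*} (a b : ℕ) (p : (Fin a → X) × (Fin b → X))
    (j : Fin (a+b)) :
    splitEquiv X a b p j = Sum.elim p.1 p.2 (finSumFinEquiv.symm j) := rfl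

lemma Wn_split (W : X → Y → ℝ) (a b : ℕ) (p : (Fin a → X) × (Fin b → X))
    (q : (Fin a → Y) × (Fin b → Y)) :
    Wn W (a+b) (splitEquiv X a b p) (splitEquiv Y a b q)
      = Kprod (Wn W a) (Wn W b) p q := by
  unfold Wn Kprod
  refine (Fintype.prod_equiv finSumFinEquiv.symm _
    (fun s => W (Sum.elim p.1 p.2 s) (Sum.elim q.1 q.2 s)) (fun j => rfl)).trans ?_
  rw [Fintype.prod_sum_type]
  rfl

/-- Flattening equivalence for blocks of words. -/
def flatEquiv (X : Type*) (k n : ℕ) : (Fin k → Fin n → X) ≃ (Fin (k*n) → X) :=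
  (Equiv.curry (Fin k) (Fin n) X).symm.trans
    (Equiv.arrowCongr finProdFinEquiv (Equiv.refl X))

lemma Wn_flat (W : X → Y → ℝ) (k n : ℕ) (x : Fin k → Fin n → X)
    (y : Fin k → Fin n → Y) :
    Wn W (k*n) (flatEquiv X k n x) (flatEquiv Y k n y) = Wn (Wn W n) k x y := by
  unfold Wn
  refine (Fintype.prod_equiv finProdFinEquiv.symm _
    (fun pr : Fin k × Fin n => W (x pr.1 pr.2) (y pr.1 pr.2)) (fun j => rfl)).trans ?_
  rw [Fintype.prod_prod_type]

lemma forneyN_superadd (W : X → Y → ℝ) (hW0 : ∀ x y, 0 ≤ W x y)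
    (hW1 : ∀ x, ∑ y, W x y = 1) (a b : ℕ) :
    forneyN W a + forneyN W b ≤ forneyN W (a + b) := by
  rw [forneyN_eq, forneyN_eq, forneyN_eq]
  have hmem : ∀ u ∈ FSet W a, ∀ w ∈ FSet W b, u + w ∈ FSet W (a+b) := by
    rintro u ⟨P₁, hP₁, rfl⟩ w ⟨P₂, hP₂, rfl⟩
    refine ⟨fun x => Pprod P₁ P₂ ((splitEquiv X a b).symm x), ?_, ?_⟩
    · exact IsUnifPmf_transport (splitEquiv X a b) (IsUnifPmf_prod hP₁ hP₂)
    · rw [valg_transport (splitEquiv X a b) (splitEquiv Y a b)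
        (fun p q => Wn_split W a b p q) (Pprod P₁ P₂)]
      rw [valg_prod (Wn W a) (Wn W b) P₁ P₂ (Wn_nonneg W hW0 a) (Wn_nonneg W hW0 b)
        (Wn_sum_one W hW1 a) (Wn_sum_one W hW1 b) hP₁.1 hP₂.1]
  have hbdd := FSet_bddAbove W hW0 hW1 (a+b)
  have h1 : ∀ u ∈ FSet W a, u ≤ sSup (FSet W (a+b)) - sSup (FSet W b) := by
    intro u hu
    have h2 : ∀ w ∈ FSet W b, w ≤ sSup (FSet W (a+b)) - u := by
      intro w hw
      have := le_csSup hbdd (hmem u hu w hw)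
      linarith
    have := csSup_le (FSet_nonempty W b) h2
    linarith
  have := csSup_le (FSet_nonempty W a) h1
  linarith

end ForneyLemmas
section MainAux

variable {X Y : Type*} [Fintype X] [Fintype Y] [Nonempty X] [Nonempty Y]

lemma erasureProb_eq_eraseg (W : X → Y → ℝ) {n M : ℕ} (c : Fin M → Fin n → X)
    (m : Fin M) : erasureProb W c m = eraseg (Wn W n) c m := rfl

/-- The achievable-rate set appearing in the definition of `Ceo`. -/
def Aset (W : X → Y → ℝ) : Set ℝ :=
  {R : ℝ | 0 ≤ R ∧ ∀ δ : ℝ, 0 < δ →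
    ∃ (n M : ℕ) (c : Fin M → Fin n → X), 1 ≤ n ∧
      Real.exp (n * R) ≤ (M : ℝ) ∧ ∀ m, erasureProb W c m < δ}

lemma Ceo_eq (W : X → Y → ℝ) : Ceo W = sSup (insert 0 (Aset W)) := rfl

/-- The set of normalized Forney functionals. -/
def Lset (W : X → Y → ℝ) : Set ℝ :=
  {v : ℝ | ∃ n : ℕ, 1 ≤ n ∧ v = forneyN W n / n}

lemma Lset_nonempty (W : X → Y → ℝ) : (Lset W).Nonempty :=
  ⟨forneyN W 1 / (1:ℕ), 1, le_rfl, rfl⟩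

lemma Lset_le (W : X → Y → ℝ) (hW0 : ∀ x y, 0 ≤ W x y)
    (hW1 : ∀ x, ∑ y, W x y = 1) :
    ∀ v ∈ Lset W, v ≤ Real.log (Fintype.card X) := by
  rintro v ⟨n, hn, rfl⟩
  have hnR : (0:ℝ) < n := by exact_mod_cast hn
  rw [div_le_iff₀ hnR]
  calc forneyN W n ≤ n * Real.log (Fintype.card X) := forneyN_le W hW0 hW1 n
    _ = Real.log (Fintype.card X) * n := by ring

lemma Lset_bddAbove (W : X → Y → ℝ) (hW0 : ∀ x y, 0 ≤ W x y)
    (hW1 : ∀ x, ∑ y, W x y = 1) : BddAbove (Lset W) :=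
  ⟨Real.log (Fintype.card X), fun v hv => Lset_le W hW0 hW1 v hv⟩

lemma Lset_sSup_nonneg (W : X → Y → ℝ) (hW0 : ∀ x y, 0 ≤ W x y)
    (hW1 : ∀ x, ∑ y, W x y = 1) : 0 ≤ sSup (Lset W) := by
  have hmem : forneyN W 1 / ((1:ℕ):ℝ) ∈ Lset W := ⟨1, le_rfl, rfl⟩
  have h0 : 0 ≤ forneyN W 1 / ((1:ℕ):ℝ) := by
    have := forneyN_nonneg W hW0 hW1 1
    positivity
  exact le_trans h0 (le_csSup (Lset_bddAbove W hW0 hW1) hmem)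

lemma dup_eraseg {A B : Type*} [Fintype A] [Fintype B] (K : A → B → ℝ)
    (hK0 : ∀ a b, 0 ≤ K a b) (hK1 : ∀ a, ∑ b, K a b = 1) {M : ℕ}
    (c : Fin M → A) {m m' : Fin M} (hne : m ≠ m') (heq : c m = c m') :
    1 ≤ eraseg K c m := by
  classical
  have hsub : Finset.univ.filter (fun b => 0 < K (c m) b) ⊆
      Finset.univ.filter (fun b : B =>
        1 < (Finset.univ.filter (fun m'' : Fin M => 0 < K (c m'') b)).card) := by
    intro b hb
    have hpos : 0 < K (c m) b := (Finset.mem_filter.mp hb).2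
    simp only [Finset.mem_filter, Finset.mem_univ, true_and]
    have h2 : ({m, m'} : Finset (Fin M)) ⊆
        Finset.univ.filter (fun m'' => 0 < K (c m'') b) := by
      intro z hz
      rcases Finset.mem_insert.mp hz with h | h
      · subst h
        simp only [Finset.mem_filter, Finset.mem_univ, true_and]
        exact hpos
      · rw [Finset.mem_singleton.mp h]
        simp only [Finset.mem_filter, Finset.mem_univ, true_and]
        rw [← heq]; exact hpos
    have := Finset.card_le_card h2
    rw [Finset.card_insert_of_notMem (by simp [hne]), Finset.card_singleton] at this
    omega
  have h1 : ∑ b ∈ Finset.univ.filter (fun b => 0 < K (c m) b), K (c m) b = 1 := by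
    rw [Finset.sum_filter_of_ne]
    · exact hK1 (c m)
    · intro b _ hbne
      exact lt_of_le_of_ne (hK0 _ _) (Ne.symm hbne)
  calc (1:ℝ) = ∑ b ∈ Finset.univ.filter (fun b => 0 < K (c m) b), K (c m) b := h1.symm
    _ ≤ eraseg K c m :=
      Finset.sum_le_sum_of_subset_of_nonneg hsub (fun b _ _ => hK0 _ _)

lemma converse_bound (W : X → Y → ℝ) (hW0 : ∀ x y, 0 ≤ W x y)
    (hW1 : ∀ x, ∑ y, W x y = 1) {R : ℝ} (hR : R ∈ Aset W) :
    R ≤ sSup (Lset W) := by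
  obtain ⟨hR0, hcode⟩ := hR
  by_contra hcon
  push_neg at hcon
  set L := sSup (Lset W) with hLdef
  have hL0 : 0 ≤ L := Lset_sSup_nonneg W hW0 hW1
  have hR0' : 0 < R := lt_of_le_of_lt hL0 hcon
  set δ : ℝ := (R - L) / (2 * R) with hδdef
  have hδ0 : 0 < δ := by
    rw [hδdef]
    have : 0 < R - L := by linarith
    positivity
  have hδ1 : δ < 1 := by
    rw [hδdef, div_lt_one (by positivity)]
    linarith
  obtain ⟨n, M, c, hn, hexp, herase⟩ := hcode δ hδ0
  have hM1 : 1 ≤ M := by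
    by_contra h
    push_neg at h
    interval_cases M
    simp only [Nat.cast_zero] at hexp
    nlinarith [Real.exp_pos ((n:ℝ) * R)]
  have hinj : Function.Injective c := by
    intro m m' h
    by_contra hne
    have h1 := dup_eraseg (Wn W n) (Wn_nonneg W hW0 n) (Wn_sum_one W hW1 n) c hne h
    have h2 : eraseg (Wn W n) c m < δ := herase m
    linarith
  obtain ⟨P, hPu, hval⟩ := converse_code (Wn W n) (Wn_nonneg W hW0 n)
    (Wn_sum_one W hW1 n) hM1 c hinj hδ1.le (fun m => herase m)
  have hvF : valg (Wn W n) P ≤ forneyN W n := by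
    rw [forneyN_eq]
    exact le_csSup (FSet_bddAbove W hW0 hW1 n) ⟨P, hPu, rfl⟩
  have hM0 : (0:ℝ) < M := by exact_mod_cast hM1
  have hlogM : (n:ℝ) * R ≤ Real.log M := (Real.le_log_iff_exp_le hM0).mpr hexp
  have hnR : (0:ℝ) < n := by exact_mod_cast hn
  have hfn : (1 - δ) * ((n:ℝ) * R) ≤ forneyN W n := by
    calc (1 - δ) * ((n:ℝ) * R) ≤ (1 - δ) * Real.log M :=
        mul_le_mul_of_nonneg_left hlogM (by linarith)
      _ ≤ valg (Wn W n) P := hval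
      _ ≤ forneyN W n := hvF
  have hdiv : (1 - δ) * R ≤ forneyN W n / n := by
    rw [le_div_iff₀ hnR]
    calc (1 - δ) * R * n = (1 - δ) * ((n:ℝ) * R) := by ring
      _ ≤ forneyN W n := hfn
  have hLle : forneyN W n / n ≤ L :=
    le_csSup (Lset_bddAbove W hW0 hW1) ⟨n, hn, rfl⟩
  have hkey : (1 - δ) * R = (R + L) / 2 := by
    rw [hδdef]
    field_simp
    ring
  linarith

lemma Ceo_bddAbove (W : X → Y → ℝ) (hW0 : ∀ x y, 0 ≤ W x y)
    (hW1 : ∀ x, ∑ y, W x y = 1) : BddAbove (insert 0 (Aset W)) := by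
  refine ⟨Real.log (Fintype.card X), ?_⟩
  rintro x (rfl | hx)
  · refine Real.log_nonneg ?_
    have : 0 < Fintype.card X := Fintype.card_pos
    exact_mod_cast this
  · exact (converse_bound W hW0 hW1 hx).trans
      (csSup_le (Lset_nonempty W) (Lset_le W hW0 hW1))

lemma ach_main (W : X → Y → ℝ) (hW0 : ∀ x y, 0 ≤ W x y)
    (hW1 : ∀ x, ∑ y, W x y = 1) {n : ℕ} (hn : 1 ≤ n) {ρ : ℝ} (hρ0 : 0 ≤ ρ)
    (hρ : ρ * n < forneyN W n) {δ : ℝ} (hδ : 0 < δ) :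
    ∃ (N M : ℕ) (c : Fin M → Fin N → X), 1 ≤ N ∧ Real.exp (N * ρ) ≤ (M:ℝ) ∧
      ∀ m, erasureProb W c m < δ := by
  rw [forneyN_eq] at hρ
  obtain ⟨v, hvmem, hvlt⟩ := exists_lt_of_lt_csSup (FSet_nonempty W n) hρ
  obtain ⟨P, hPu, rfl⟩ := hvmem
  obtain ⟨N₀, hN₀1, _, hPN₀⟩ := unif_lb hPu
  have hN₀R : (0:ℝ) < N₀ := by exact_mod_cast hN₀1
  obtain ⟨k, M, c, hk1, hexp, herase⟩ := generic_ach (Wn W n) (Wn_nonneg W hW0 n)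
    (Wn_sum_one W hW1 n) P hPu.1.1 hPu.1.2
    (c₀ := 1/(N₀:ℝ)) (by positivity)
    (by rw [div_le_one hN₀R]; exact_mod_cast hN₀1)
    (fun a ha => le_of_eq (hPN₀ a ha).symm) (ρ := ρ * n)
    (by positivity) hvlt hδ
  refine ⟨k * n, M, fun m => flatEquiv X k n (c m), ?_, ?_, ?_⟩
  · exact le_trans hk1 (Nat.le_mul_of_pos_right k (by omega))
  · have hcast : ((k * n : ℕ):ℝ) * ρ = (k:ℝ) * (ρ * n) := by push_cast; ring
    rw [hcast]
    exact hexp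
  · intro m
    rw [erasureProb_eq_eraseg,
      eraseg_transport (flatEquiv X k n) (flatEquiv Y k n) (Wn_flat W k n) c m]
    exact herase m

lemma forney_div_le_Ceo (W : X → Y → ℝ) (hW0 : ∀ x y, 0 ≤ W x y)
    (hW1 : ∀ x, ∑ y, W x y = 1) {n : ℕ} (hn : 1 ≤ n) :
    forneyN W n / n ≤ Ceo W := by
  have hbdd := Ceo_bddAbove W hW0 hW1
  have hC0 : 0 ≤ Ceo W := by
    rw [Ceo_eq]
    exact le_csSup hbdd (Set.mem_insert 0 _)
  by_contra hcon
  push_neg at hcon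
  set f := forneyN W n / n with hfdef
  set ρ := (Ceo W + f) / 2 with hρdef
  have hρ0 : 0 ≤ ρ := by
    rw [hρdef]
    have : 0 ≤ f := le_trans hC0 hcon.le
    linarith
  have hρf : ρ < f := by rw [hρdef]; linarith
  have hnR : (0:ℝ) < n := by exact_mod_cast hn
  have hρn : ρ * n < forneyN W n := by
    have := (div_lt_div_iff_of_pos_right hnR).mpr hρf
    rw [lt_div_iff₀ hnR] at hρf
    exact hρf
  have hmem : ρ ∈ Aset W :=
    ⟨hρ0, fun δ hδ => ach_main W hW0 hW1 hn hρ0 hρn hδ⟩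
  have h1 : ρ ≤ Ceo W := by
    rw [Ceo_eq]
    exact le_csSup hbdd (Set.mem_insert_of_mem _ hmem)
  have h2 : Ceo W < ρ := by rw [hρdef]; linarith
  linarith

end MainAux
/-- Multi-letter formula for the zero-undetected-error capacity: `C_eo` is the
limit (and also the supremum) over `n` of `(1/n)` times the maximum over PMFs on
`X^n` that are uniform over their support of `∑_y (PWⁿ)(y) log (1/P(Xⁿ(y)))`. -/
theorem zue_capacity_multiletter {X Y : Type*} [Fintype X] [Fintype Y]
    [Nonempty X] [Nonempty Y] (W : X → Y → ℝ)
    (hW0 : ∀ x y, 0 ≤ W x y) (hW1 : ∀ x, ∑ y, W x y = 1) :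
    Tendsto (fun n : ℕ => forneyN W n / n) atTop (nhds (Ceo W)) ∧
    Ceo W = sSup {v : ℝ | ∃ n : ℕ, 1 ≤ n ∧ v = forneyN W n / n} := by
  have hCeoL : Ceo W = sSup (Lset W) := by
    apply le_antisymm
    · rw [Ceo_eq]
      refine csSup_le ⟨0, Set.mem_insert 0 _⟩ ?_
      rintro x (rfl | hx)
      · exact Lset_sSup_nonneg W hW0 hW1
      · exact converse_bound W hW0 hW1 hx
    · refine csSup_le (Lset_nonempty W) ?_
      rintro v ⟨n, hn, rfl⟩
      exact forney_div_le_Ceo W hW0 hW1 hn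
  have hsubadd : Subadditive (fun n : ℕ => -forneyN W n) := by
    intro a b
    have := forneyN_superadd W hW0 hW1 a b
    simp only
    linarith
  have hbddB : BddBelow (Set.range fun n : ℕ => (-forneyN W n) / n) := by
    refine ⟨-Real.log (Fintype.card X), ?_⟩
    rintro x ⟨n, rfl⟩
    simp only
    rcases Nat.eq_zero_or_pos n with h | h
    · subst h
      simp only [Nat.cast_zero, div_zero]
      refine neg_nonpos.mpr (Real.log_nonneg ?_)
      have : 0 < Fintype.card X := Fintype.card_pos
      exact_mod_cast this
    · have hnR : (0:ℝ) < n := by exact_mod_cast h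
      rw [neg_div, neg_le_neg_iff, div_le_iff₀ hnR]
      calc forneyN W n ≤ n * Real.log (Fintype.card X) := forneyN_le W hW0 hW1 n
        _ = Real.log (Fintype.card X) * n := by ring
  have htend := hsubadd.tendsto_lim hbddB
  have hlim : hsubadd.lim = -sSup (Lset W) := by
    have h1 : hsubadd.lim = sInf ((fun n : ℕ => (-forneyN W n) / n) '' Set.Ici 1) := by rw [Subadditive.lim]
    have himg : ((fun n : ℕ => (-forneyN W n) / n) '' Set.Ici 1) = -(Lset W) := by
      ext z
      simp only [Set.mem_image, Set.mem_Ici, Set.mem_neg, Lset, Set.mem_setOf_eq]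
      constructor
      · rintro ⟨n, hn, rfl⟩
        exact ⟨n, hn, by rw [neg_div, neg_neg]⟩
      · rintro ⟨n, hn, hz⟩
        refine ⟨n, hn, ?_⟩
        rw [neg_div]
        linarith
    rw [h1, himg, Real.sInf_def, neg_neg]
  have hfun : (fun n : ℕ => forneyN W n / n) = fun n : ℕ => -((-forneyN W n) / n) := by
    funext n
    rw [neg_div, neg_neg]
  constructor
  · rw [hfun, hCeoL]
    have hneg := htend.neg
    rw [hlim, neg_neg] at hneg
    exact hneg
  · exact hCeoL
end

section
/- For every directed graph G, the Sperner capacity can be computed via maximal acyclic induced subgraphs of strong powers: Σ(G) = lim_{n→∞} (1/n) log ρ(G^n), where ρ(H) is the maximum cardinality of a subset of V(H) inducing an acyclic subgraph; moreover the limit exists and equals sup_n (1/n) log ρ(G^n). -/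
open Real Filter Topology

/-- Adjacency relation of the `n`-fold strong power of the directed graph with
adjacency relation `E`: there is an edge from `x` to `y` iff `x ≠ y` and in each
coordinate `j` either `x j = y j` or there is an edge from `x j` to `y j`. -/
def strongPow {V : Type*} (E : V → V → Prop) (n : ℕ) (x y : Fin n → V) : Prop :=
  x ≠ y ∧ ∀ j, x j = y j ∨ E (x j) (y j)

/-- `l` is a directed cycle of the graph `E` all of whose vertices lie in `A`:
a list of at least two distinct vertices with an edge between consecutive
vertices and an edge from the last vertex back to the first. -/
def IsCycleIn {V : Type*} (E : V → V → Prop) (A : Set V) (l : List V) : Prop :=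
  2 ≤ l.length ∧ l.Nodup ∧ (∀ x ∈ l, x ∈ A) ∧ l.Chain' E ∧
    ∀ x ∈ l.head?, ∀ y ∈ l.getLast?, E y x

/-- The subgraph of `E` induced by `A` is acyclic. -/
def AcyclicOn {V : Type*} (E : V → V → Prop) (A : Set V) : Prop :=
  ¬ ∃ l : List V, IsCycleIn E A l

/-- `α(G)`: the maximum cardinality of an independent set in the graph `E`. -/
noncomputable def alphaOf {V : Type*} [Fintype V] (E : V → V → Prop) : ℕ :=
  sSup {k : ℕ | ∃ A : Finset V, (∀ x ∈ A, ∀ y ∈ A, ¬ E x y) ∧ A.card = k}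

/-- `ρ(G)`: the maximum cardinality of a subset of vertices inducing an acyclic
subgraph of `E`. -/
noncomputable def rhoOf {V : Type*} [Fintype V] (E : V → V → Prop) : ℕ :=
  sSup {k : ℕ | ∃ A : Finset V, AcyclicOn E ↑A ∧ A.card = k}

/-- The Sperner capacity `Σ(G) = lim_n (1/n) log α(Gⁿ) = sup_n (1/n) log α(Gⁿ)`
of the graph `E` (natural logarithms). -/
noncomputable def spernerCap {V : Type*} [Fintype V] (E : V → V → Prop) : ℝ :=
  sSup {x : ℝ | ∃ n : ℕ, 1 ≤ n ∧ x = Real.log (alphaOf (strongPow E n)) / n}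

section general

variable {W : Type*} [Fintype W] {R : W → W → Prop}
set_option linter.unusedSectionVars false

lemma bddAbove_alphaSet :
    BddAbove {k : ℕ | ∃ A : Finset W, (∀ x ∈ A, ∀ y ∈ A, ¬ R x y) ∧ A.card = k} :=
  ⟨Fintype.card W, by rintro k ⟨A, -, rfl⟩; exact Finset.card_le_univ A⟩

lemma bddAbove_rhoSet :
    BddAbove {k : ℕ | ∃ A : Finset W, AcyclicOn R ↑A ∧ A.card = k} :=
  ⟨Fintype.card W, by rintro k ⟨A, -, rfl⟩; exact Finset.card_le_univ A⟩

lemma acyclicOn_mono {S T : Set W} (hST : S ⊆ T) (hT : AcyclicOn R T) : AcyclicOn R S := by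
  rintro ⟨l, h1, h2, h3, h4, h5⟩
  exact hT ⟨l, h1, h2, fun x hx => hST (h3 x hx), h4, h5⟩

lemma acyclicOn_of_indep {A : Set W} (h : ∀ x ∈ A, ∀ y ∈ A, ¬ R x y) : AcyclicOn R A := by
  rintro ⟨l, h1, h2, h3, h4, h5⟩
  match l with
  | [] => simp at h1
  | [a] => simp at h1
  | a :: b :: t =>
    exact h a (h3 a (by simp)) b (h3 b (by simp)) (List.isChain_cons_cons.mp h4).1

lemma exists_alpha_witness :
    ∃ A : Finset W, (∀ x ∈ A, ∀ y ∈ A, ¬ R x y) ∧ A.card = alphaOf R := by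
  have h := Nat.sSup_mem (s := {k : ℕ | ∃ A : Finset W, (∀ x ∈ A, ∀ y ∈ A, ¬ R x y) ∧ A.card = k})
    ⟨0, ∅, by simp⟩ bddAbove_alphaSet
  exact h

lemma exists_rho_witness :
    ∃ A : Finset W, AcyclicOn R ↑A ∧ A.card = rhoOf R := by
  have h := Nat.sSup_mem (s := {k : ℕ | ∃ A : Finset W, AcyclicOn R ↑A ∧ A.card = k})
    ⟨0, ∅, ⟨acyclicOn_of_indep (by simp), by simp⟩⟩ bddAbove_rhoSet
  exact h

lemma card_le_alpha {A : Finset W} (h : ∀ x ∈ A, ∀ y ∈ A, ¬ R x y) : A.card ≤ alphaOf R :=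
  le_csSup bddAbove_alphaSet ⟨A, h, rfl⟩

lemma card_le_rho {A : Finset W} (h : AcyclicOn R ↑A) : A.card ≤ rhoOf R :=
  le_csSup bddAbove_rhoSet ⟨A, h, rfl⟩

lemma alpha_le_rho : alphaOf R ≤ rhoOf R := by
  obtain ⟨A, hA, hcard⟩ := exists_alpha_witness (R := R)
  rw [← hcard]
  exact card_le_rho (acyclicOn_of_indep (by exact_mod_cast hA))

lemma rho_le_card : rhoOf R ≤ Fintype.card W := by
  obtain ⟨A, -, hcard⟩ := exists_rho_witness (R := R)
  rw [← hcard]; exact Finset.card_le_univ A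

-- easy direction: a rank function forces acyclicity
lemma chain'_head_le_getLast {S : Set W} {f : W → ℕ}
    (hf : ∀ x ∈ S, ∀ y ∈ S, R x y → f x < f y) :
    ∀ l : List W, l.Chain' R → (∀ x ∈ l, x ∈ S) →
      ∀ x ∈ l.head?, ∀ y ∈ l.getLast?, f x ≤ f y := by
  intro l
  induction l with
  | nil => simp
  | cons a t ih =>
    intro hch hmem x hx y hy
    simp only [List.head?_cons, Option.mem_some_iff] at hx
    subst hx
    match t with
    | [] =>
      simp only [List.getLast?_singleton, Option.mem_some_iff] at hy
      subst hy; exact le_rfl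
    | b :: t' =>
      have hab : R a b := (List.isChain_cons_cons.mp hch).1
      have h1 : f a < f b := hf a (hmem a (by simp)) b (hmem b (by simp)) hab
      have h2 := ih (List.isChain_cons_cons.mp hch).2 (fun z hz => hmem z (by simp [hz]))
        b (by simp) y (by rwa [List.getLast?_cons_cons] at hy)
      omega

lemma acyclicOn_of_rank {S : Set W} {f : W → ℕ}
    (hf : ∀ x ∈ S, ∀ y ∈ S, R x y → f x < f y) : AcyclicOn R S := by
  rintro ⟨l, h1, h2, h3, h4, h5⟩
  match l with
  | [] => simp at h1
  | [a] => simp at h1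
  | a :: b :: t =>
    set l' : List W := a :: b :: t with hl'
    have hhead : a ∈ l'.head? := by simp [hl']
    have hlast : l'.getLast (by simp) ∈ l'.getLast? := List.getLast?_eq_getLast _ ▸ rfl
    have hle : f a ≤ f (l'.getLast (by simp)) :=
      chain'_head_le_getLast hf l' h4 h3 a hhead _ hlast
    have hlastmem : l'.getLast (by simp) ∈ l' := List.getLast_mem _
    have hlt : f (l'.getLast (by simp)) < f a :=
      hf _ (h3 _ hlastmem) a (h3 a (by simp [hl'])) (h5 a hhead _ hlast)
    omega



variable [DecidableEq W]


lemma exists_source (hirrR : ∀ x, ¬ R x x) (A : Finset W) (hne : A.Nonempty)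
    (hA : AcyclicOn R ↑A) : ∃ x ∈ A, ∀ y ∈ A, ¬ R y x := by
  by_contra hcon
  push_neg at hcon
  have h' : ∀ x : W, ∃ y : W, x ∈ A → y ∈ A ∧ R y x := by
    intro x
    by_cases hx : x ∈ A
    · obtain ⟨y, hy1, hy2⟩ := hcon x hx
      exact ⟨y, fun _ => ⟨hy1, hy2⟩⟩
    · exact ⟨x, fun c => absurd c hx⟩
  choose g hg using h'
  obtain ⟨a0, ha0⟩ := hne
  set s : ℕ → W := fun k => g^[k] a0 with hs
  have hsA : ∀ k, s k ∈ A := by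
    intro k
    induction k with
    | zero => simpa [hs] using ha0
    | succ k ih =>
      have : s (k+1) = g (s k) := Function.iterate_succ_apply' g k a0
      rw [this]
      exact (hg (s k) ih).1
  have hsE : ∀ k, R (s (k+1)) (s k) := by
    intro k
    have : s (k+1) = g (s k) := Function.iterate_succ_apply' g k a0
    rw [this]
    exact (hg (s k) (hsA k)).2
  -- pigeonhole
  obtain ⟨i, hi, j, hj, hij, hsij⟩ :=
    Finset.exists_ne_map_eq_of_card_lt_of_maps_to
      (s := Finset.range (A.card + 1)) (t := A)
      (by simp) (fun i _ => hsA i)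
  -- minimal repeat distance
  set D : Set ℕ := {d : ℕ | 0 < d ∧ ∃ i0, s i0 = s (i0 + d)} with hD
  have hDne : D.Nonempty := by
    rcases lt_or_gt_of_ne hij with h | h
    · exact ⟨j - i, by omega, i, by rw [hsij]; congr 1; omega⟩
    · exact ⟨i - j, by omega, j, by rw [← hsij]; congr 1; omega⟩
  set d := sInf D with hd
  obtain ⟨hdpos, i0, hi0⟩ : 0 < d ∧ ∃ i0, s i0 = s (i0 + d) := Nat.sInf_mem hDne
  have hd2 : 2 ≤ d := by
    by_contra h
    have hd1 : d = 1 := by omega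
    rw [hd1] at hi0
    have hR := hsE i0
    rw [← hi0] at hR
    exact hirrR _ hR
  -- build the cycle
  apply hA
  refine ⟨(List.range d).map (fun t => s (i0 + d - 1 - t)), ?_, ?_, ?_, ?_, ?_⟩
  · simpa using hd2
  · refine List.Nodup.map_on ?_ List.nodup_range
    intro a ha b hb hab
    simp only [List.mem_range] at ha hb
    by_contra hne'
    have key : ∀ p q : ℕ, p < q → s p = s q → d ≤ q - p := by
      intro p q hpq hspq
      exact Nat.sInf_le ⟨by omega, p, by rw [hspq]; congr 1; omega⟩
    rcases lt_or_gt_of_ne (fun h : a = b => hne' h) with h | h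
    · have := key (i0 + d - 1 - b) (i0 + d - 1 - a) (by omega) hab.symm
      omega
    · have := key (i0 + d - 1 - a) (i0 + d - 1 - b) (by omega) hab
      omega
  · intro x hx
    simp only [List.mem_map] at hx
    obtain ⟨t, -, rfl⟩ := hx
    exact hsA _
  · show List.IsChain _ _
    rw [List.isChain_map]
    obtain ⟨e, he⟩ : ∃ e, d = e + 2 := ⟨d - 2, by omega⟩
    rw [he, show e + 2 = (e+1) + 1 from rfl, List.isChain_range_succ]
    intro m hm
    have heq : i0 + (e + 1 + 1) - 1 - m = (i0 + (e + 1 + 1) - 1 - (m+1)) + 1 := by omega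
    rw [heq]
    exact hsE _
  · intro x hx y hy
    simp only [List.head?_map, List.getLast?_map, List.head?_range, List.getLast?_range,
      if_neg (by omega : ¬ d = 0), Option.map_some, Option.mem_some_iff] at hx hy
    subst hx; subst hy
    have h1 : i0 + d - 1 - (d - 1) = i0 := by omega
    have h2 : i0 + d = (i0 + d - 1) + 1 := by omega
    rw [h1]
    rw [hi0, h2]
    exact hsE _

lemma exists_rank (hirrR : ∀ x, ¬ R x x) :
    ∀ (n : ℕ) (A : Finset W), A.card = n → AcyclicOn R ↑A →
      ∃ f : W → ℕ, (∀ x ∈ A, f x < A.card) ∧ ∀ x ∈ A, ∀ y ∈ A, R x y → f x < f y := by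
  intro n
  induction n with
  | zero =>
    intro A hcard hA
    rw [Finset.card_eq_zero] at hcard
    subst hcard
    exact ⟨fun _ => 0, by simp, by simp⟩
  | succ n ih =>
    intro A hcard hA
    have hne : A.Nonempty := Finset.card_pos.mp (by omega)
    obtain ⟨x, hx, hsrc⟩ := exists_source hirrR A hne hA
    have hcard' : (A.erase x).card = n := by rw [Finset.card_erase_of_mem hx]; omega
    obtain ⟨f, hf1, hf2⟩ := ih (A.erase x) hcard'
      (by
        rintro ⟨l, h1, h2, h3, h4, h5⟩
        exact hA ⟨l, h1, h2, fun z hz => Finset.mem_of_mem_erase (by exact_mod_cast h3 z hz),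
          h4, h5⟩)
    refine ⟨fun y => if y = x then 0 else f y + 1, ?_, ?_⟩
    · intro y hy
      by_cases hyx : y = x
      · simp [hyx, hcard]
      · simp only [if_neg hyx]
        have := hf1 y (Finset.mem_erase.mpr ⟨hyx, hy⟩)
        omega
    · intro u hu v hv huv
      by_cases hvx : v = x
      · exact absurd huv (hvx ▸ hsrc u hu)
      · by_cases hux : u = x
        · simp [hux, hvx]
        · simp only [if_neg hux, if_neg hvx]
          have := hf2 u (Finset.mem_erase.mpr ⟨hux, hu⟩) v (Finset.mem_erase.mpr ⟨hvx, hv⟩) huv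
          omega


end general

section prod
variable {V : Type*} [Fintype V] [DecidableEq V] {E : V → V → Prop}
set_option linter.unusedSectionVars false

lemma strongPow_irrefl (n : ℕ) : ∀ x, ¬ strongPow E n x x := fun x h => h.1 rfl

lemma append_decomp {m n : ℕ} (w : Fin (m+n) → V) :
    Fin.append (fun i => w (Fin.castAdd n i)) (fun i => w (Fin.natAdd m i)) = w := by
  funext i
  induction i using Fin.addCases with
  | left i => rw [Fin.append_left]
  | right i => rw [Fin.append_right]

lemma strongPow_proj_left {m n : ℕ} {w w' : Fin (m+n) → V}
    (h : strongPow E (m+n) w w') :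
    (fun i => w (Fin.castAdd n i)) = (fun i => w' (Fin.castAdd n i)) ∨
      strongPow E m (fun i => w (Fin.castAdd n i)) (fun i => w' (Fin.castAdd n i)) := by
  by_cases heq : (fun i => w (Fin.castAdd n i)) = (fun i => w' (Fin.castAdd n i))
  · exact Or.inl heq
  · exact Or.inr ⟨heq, fun j => h.2 (Fin.castAdd n j)⟩

lemma strongPow_proj_right {m n : ℕ} {w w' : Fin (m+n) → V}
    (h : strongPow E (m+n) w w') :
    (fun i => w (Fin.natAdd m i)) = (fun i => w' (Fin.natAdd m i)) ∨
      strongPow E n (fun i => w (Fin.natAdd m i)) (fun i => w' (Fin.natAdd m i)) := by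
  by_cases heq : (fun i => w (Fin.natAdd m i)) = (fun i => w' (Fin.natAdd m i))
  · exact Or.inl heq
  · exact Or.inr ⟨heq, fun j => h.2 (Fin.natAdd m j)⟩

lemma rho_supermul (m n : ℕ) :
    rhoOf (strongPow E m) * rhoOf (strongPow E n) ≤ rhoOf (strongPow E (m+n)) := by
  classical
  obtain ⟨A, hA, hcA⟩ := exists_rho_witness (R := strongPow E m)
  obtain ⟨B, hB, hcB⟩ := exists_rho_witness (R := strongPow E n)
  obtain ⟨f, hf1, hf2⟩ := exists_rank (strongPow_irrefl m) A.card A rfl hA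
  obtain ⟨g, hg1, hg2⟩ := exists_rank (strongPow_irrefl n) B.card B rfl hB
  set C : Finset (Fin (m+n) → V) :=
    (A ×ˢ B).image (fun p => Fin.append p.1 p.2) with hC
  have hinj : Set.InjOn (fun p : (Fin m → V) × (Fin n → V) => Fin.append p.1 p.2) ↑(A ×ˢ B) := by
    rintro ⟨a, b⟩ - ⟨a', b'⟩ - hab
    simp only at hab
    have h1 : a = a' := by
      funext i
      have := congrFun hab (Fin.castAdd n i)
      rwa [Fin.append_left, Fin.append_left] at this
    have h2 : b = b' := by
      funext i
      have := congrFun hab (Fin.natAdd m i)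
      rwa [Fin.append_right, Fin.append_right] at this
    rw [h1, h2]
  have hcard : C.card = rhoOf (strongPow E m) * rhoOf (strongPow E n) := by
    rw [hC, Finset.card_image_of_injOn hinj, Finset.card_product, hcA, hcB]
  rw [← hcard]
  apply card_le_rho
  apply acyclicOn_of_rank
    (f := fun w => f (fun i => w (Fin.castAdd n i)) + g (fun i => w (Fin.natAdd m i)))
  intro w hw w' hw' hww'
  obtain ⟨p, hp, rfl⟩ : ∃ p ∈ A ×ˢ B, Fin.append p.1 p.2 = w := by
    simpa only [hC, Finset.mem_coe, Finset.mem_image] using hw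
  obtain ⟨q, hq, rfl⟩ : ∃ q ∈ A ×ˢ B, Fin.append q.1 q.2 = w' := by
    simpa only [hC, Finset.mem_coe, Finset.mem_image] using hw'
  rw [Finset.mem_product] at hp hq
  have hL1 : (fun i => Fin.append p.1 p.2 (Fin.castAdd n i)) = p.1 := by
    funext i; rw [Fin.append_left]
  have hR1 : (fun i => Fin.append p.1 p.2 (Fin.natAdd m i)) = p.2 := by
    funext i; rw [Fin.append_right]
  have hL2 : (fun i => Fin.append q.1 q.2 (Fin.castAdd n i)) = q.1 := by
    funext i; rw [Fin.append_left]
  have hR2 : (fun i => Fin.append q.1 q.2 (Fin.natAdd m i)) = q.2 := by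
    funext i; rw [Fin.append_right]
  have hleft := strongPow_proj_left hww'
  have hright := strongPow_proj_right hww'
  rw [hL1, hL2] at hleft
  rw [hR1, hR2] at hright
  simp only [hL1, hL2, hR1, hR2]
  rcases hleft with hl | hl
  · rcases hright with hr | hr
    · exact absurd (by rw [hl, hr]) hww'.1
    · rw [hl]
      exact Nat.add_lt_add_left (hg2 p.2 hp.2 q.2 hq.2 hr) _
  · have hgle : g p.2 ≤ g q.2 := by
      rcases hright with hr | hr
      · rw [hr]
      · exact (hg2 p.2 hp.2 q.2 hq.2 hr).le
    have := hf2 p.1 hp.1 q.1 hq.1 hl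
    omega

end prod

section pigeon
variable {V : Type*} [Fintype V] [DecidableEq V] {E : V → V → Prop}
set_option linter.unusedSectionVars false

lemma rho_pow_le_alpha (m k : ℕ) (hk : 1 ≤ k) :
    (rhoOf (strongPow E m))^k ≤
      (k * (rhoOf (strongPow E m) - 1) + 1) * alphaOf (strongPow E (m*k)) := by
  classical
  set e : Fin k × Fin m ≃ Fin (m*k) := finProdFinEquiv.trans (finCongr (Nat.mul_comm k m)) with he
  set block : Fin k → (Fin (m*k) → V) → (Fin m → V) := fun i w j => w (e (i, j)) with hblock
  set assemble : (Fin k → Fin m → V) → (Fin (m*k) → V) :=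
    fun h t => h (e.symm t).1 (e.symm t).2 with hassemble
  have block_assemble : ∀ (h : Fin k → Fin m → V) i, block i (assemble h) = h i := by
    intro h i; funext j; simp [hblock, hassemble]
  have assemble_block : ∀ w : Fin (m*k) → V, assemble (fun i => block i w) = w := by
    intro w; funext t; simp [hblock, hassemble]
  obtain ⟨A, hA, hcA⟩ := exists_rho_witness (R := strongPow E m)
  obtain ⟨f, hf1, hf2⟩ := exists_rank (strongPow_irrefl m) A.card A rfl hA
  set r := rhoOf (strongPow E m) with hr
  rw [hcA] at hf1
  set S : Finset (Fin (m*k) → V) := (Fintype.piFinset (fun _ : Fin k => A)).image assemble with hS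
  have hinj : Set.InjOn assemble ↑(Fintype.piFinset (fun _ : Fin k => A)) := by
    intro h1 _hm1 h2 _hm2 h12
    funext i j
    have := congrFun (block_assemble h1 i) j
    rw [h12] at this
    rw [← this, block_assemble]
  have hScard : S.card = r ^ k := by
    rw [hS, Finset.card_image_of_injOn hinj, Fintype.card_piFinset]
    simp [hcA]
  have hSblock : ∀ w ∈ S, ∀ i, block i w ∈ A := by
    intro w hw i
    rw [hS, Finset.mem_image] at hw
    obtain ⟨h, hh, rfl⟩ := hw
    rw [block_assemble]
    exact Fintype.mem_piFinset.mp hh i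
  set N := k * (r - 1) + 1 with hN
  set sumf : (Fin (m*k) → V) → ℕ := fun w => ∑ i, f (block i w) with hsumf
  have hmaps : ∀ w ∈ S, sumf w ∈ Finset.range N := by
    intro w hw
    rw [Finset.mem_range, hN]
    have : sumf w ≤ ∑ _i : Fin k, (r - 1) := by
      apply Finset.sum_le_sum
      intro i _
      have := hf1 (block i w) (hSblock w hw i)
      omega
    simp only [Finset.sum_const, Finset.card_univ, Fintype.card_fin, smul_eq_mul] at this
    omega
  have hsplit := Finset.card_eq_sum_card_fiberwise hmaps
  have hfiber : ∀ t ∈ Finset.range N,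
      (S.filter (fun w => sumf w = t)).card ≤ alphaOf (strongPow E (m*k)) := by
    intro t _
    apply card_le_alpha
    intro w hw w' hw' hedge
    rw [Finset.mem_filter] at hw hw'
    have hlt : sumf w < sumf w' := by
      apply Finset.sum_lt_sum
      · intro i _
        rcases (by
          by_cases hbe : block i w = block i w'
          · exact Or.inl hbe
          · exact Or.inr ⟨hbe, fun j => hedge.2 (e (i, j))⟩ :
            block i w = block i w' ∨ strongPow E m (block i w) (block i w')) with hbe | hbe
        · rw [hbe]
        · exact (hf2 _ (hSblock w hw.1 i) _ (hSblock w' hw'.1 i) hbe).le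
      · by_contra hcon
        push_neg at hcon
        have hall : ∀ i, block i w = block i w' := by
          intro i
          by_cases hbe : block i w = block i w'
          · exact hbe
          · exact absurd (hf2 _ (hSblock w hw.1 i) _ (hSblock w' hw'.1 i)
              ⟨hbe, fun j => hedge.2 (e (i, j))⟩) (by
                have := hcon i (Finset.mem_univ i)
                omega)
        apply hedge.1
        rw [← assemble_block w, ← assemble_block w']
        rw [funext hall]
    omega
  calc r ^ k = S.card := hScard.symm
    _ = ∑ t ∈ Finset.range N, (S.filter (fun w => sumf w = t)).card := hsplit
    _ ≤ ∑ _t ∈ Finset.range N, alphaOf (strongPow E (m*k)) :=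
        Finset.sum_le_sum hfiber
    _ = N * alphaOf (strongPow E (m*k)) := by
        rw [Finset.sum_const, Finset.card_range, smul_eq_mul]

end pigeon


/-- The Sperner capacity can be computed via maximum acyclic induced subgraphs
of strong powers: `(1/n) log ρ(Gⁿ)` converges to `Σ(G)`, and `Σ(G)` equals the
supremum over `n ≥ 1` of `(1/n) log ρ(Gⁿ)`. -/
theorem spernerCap_eq_lim_rho {V : Type*} [Fintype V] (E : V → V → Prop)
    (hirr : ∀ x, ¬ E x x) :
    Tendsto (fun n : ℕ => Real.log (rhoOf (strongPow E n)) / n) atTop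
      (nhds (spernerCap E)) ∧
    spernerCap E =
      sSup {x : ℝ | ∃ n : ℕ, 1 ≤ n ∧ x = Real.log (rhoOf (strongPow E n)) / n} := by
  classical
  set aN : ℕ → ℕ := fun n => alphaOf (strongPow E n) with haN
  set rN : ℕ → ℕ := fun n => rhoOf (strongPow E n) with hrN
  set Sα : Set ℝ := {x : ℝ | ∃ n : ℕ, 1 ≤ n ∧ x = Real.log (aN n) / n} with hSα
  set Sρ : Set ℝ := {x : ℝ | ∃ n : ℕ, 1 ≤ n ∧ x = Real.log (rN n) / n} with hSρ
  have hcap : spernerCap E = sSup Sα := rfl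
  by_cases hV : Nonempty V
  · -- main case
    have hρ1 : ∀ n, 1 ≤ rN n := by
      intro n
      have hx0 : Nonempty (Fin n → V) := ⟨fun _ => Classical.choice hV⟩
      obtain ⟨x0⟩ := hx0
      have : ({x0} : Finset (Fin n → V)).card ≤ rN n := by
        apply card_le_rho
        apply acyclicOn_of_indep
        intro x hx y hy
        simp only [Finset.coe_singleton, Set.mem_singleton_iff] at hx hy
        subst hx; subst hy
        exact strongPow_irrefl n _
      simpa using this
    have hα1 : ∀ n, 1 ≤ aN n := by
      intro n
      have hx0 : Nonempty (Fin n → V) := ⟨fun _ => Classical.choice hV⟩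
      obtain ⟨x0⟩ := hx0
      have : ({x0} : Finset (Fin n → V)).card ≤ aN n := by
        apply card_le_alpha
        intro x hx y hy
        simp only [Finset.mem_singleton] at hx hy
        subst hx; subst hy
        exact strongPow_irrefl n _
      simpa using this
    have hρ1' : ∀ n, (1:ℝ) ≤ (rN n : ℝ) := fun n => by exact_mod_cast hρ1 n
    have hα1' : ∀ n, (1:ℝ) ≤ (aN n : ℝ) := fun n => by exact_mod_cast hα1 n
    set C : ℝ := (Fintype.card V : ℝ) with hCdef
    have hC1 : (1:ℝ) ≤ C := by
      have h9 : 1 ≤ Fintype.card V := Fintype.card_pos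
      rw [hCdef]
      exact_mod_cast h9
    have hlogρ_le : ∀ n : ℕ, Real.log (rN n) ≤ n * Real.log C := by
      intro n
      have h1 : rN n ≤ Fintype.card V ^ n := by
        have := rho_le_card (R := strongPow E n)
        rwa [Fintype.card_fun, Fintype.card_fin] at this
      have h2 : (rN n : ℝ) ≤ C ^ n := by
        rw [hCdef]; exact_mod_cast h1
      calc Real.log (rN n) ≤ Real.log (C ^ n) :=
            (Real.log_le_log_iff (by linarith [hρ1' n]) (by positivity)).mpr h2
        _ = n * Real.log C := by rw [Real.log_pow]
    -- Fekete
    set u : ℕ → ℝ := fun n => -Real.log (rN n) with hu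
    have hsub : Subadditive u := by
      intro p q
      have h1 : (rN p : ℝ) * rN q ≤ rN (p+q) := by
        exact_mod_cast rho_supermul (E := E) p q
      have h2 : Real.log ((rN p : ℝ) * rN q) ≤ Real.log (rN (p+q)) :=
        (Real.log_le_log_iff (by nlinarith [hρ1' p, hρ1' q]) (by linarith [hρ1' (p+q)])).mpr h1
      rw [Real.log_mul (by linarith [hρ1' p]) (by linarith [hρ1' q])] at h2
      simp only [hu]
      linarith
    have hbdd : BddBelow (Set.range fun n : ℕ => u n / n) := by
      refine ⟨-Real.log C, ?_⟩
      rintro x ⟨n, rfl⟩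
      match n with
      | 0 =>
        simp only [Nat.cast_zero, div_zero]
        simp only [neg_nonpos, Left.neg_nonpos_iff]
        exact Real.log_nonneg hC1
      | Nat.succ n =>
        have hn0 : (0:ℝ) < (n.succ : ℝ) := by positivity
        simp only [hu, neg_div, neg_le_neg_iff, ge_iff_le, le_neg]
        rw [neg_neg, div_le_iff₀ hn0]
        calc Real.log (rN n.succ) ≤ n.succ * Real.log C := hlogρ_le n.succ
          _ = Real.log C * n.succ := by ring
    have htendu := hsub.tendsto_lim hbdd
    -- bounds for the sup sets
    have bddSρ : BddAbove Sρ := by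
      refine ⟨Real.log C, ?_⟩
      rintro x ⟨n, hn, rfl⟩
      have hn0 : (0:ℝ) < (n : ℝ) := by exact_mod_cast hn
      rw [div_le_iff₀ hn0]
      calc Real.log (rN n) ≤ n * Real.log C := hlogρ_le n
        _ = Real.log C * n := by ring
    have bddSα : BddAbove Sα := by
      refine ⟨Real.log C, ?_⟩
      rintro x ⟨n, hn, rfl⟩
      have hn0 : (0:ℝ) < (n : ℝ) := by exact_mod_cast hn
      rw [div_le_iff₀ hn0]
      have hle : Real.log (aN n) ≤ Real.log (rN n) :=
        (Real.log_le_log_iff (by linarith [hα1' n]) (by linarith [hρ1' n])).mpr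
          (by exact_mod_cast alpha_le_rho (R := strongPow E n))
      calc Real.log (aN n) ≤ Real.log (rN n) := hle
        _ ≤ n * Real.log C := hlogρ_le n
        _ = Real.log C * n := by ring
    have neSρ : Sρ.Nonempty := ⟨Real.log (rN 1) / 1, 1, le_rfl, by norm_num⟩
    have neSα : Sα.Nonempty := ⟨Real.log (aN 1) / 1, 1, le_rfl, by norm_num⟩
    -- Step A : sSup Sα ≤ sSup Sρ
    have stepA : sSup Sα ≤ sSup Sρ := by
      apply csSup_le neSα
      rintro x ⟨n, hn, rfl⟩
      have hn0 : (0:ℝ) < (n : ℝ) := by exact_mod_cast hn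
      have hle : Real.log (aN n) ≤ Real.log (rN n) :=
        (Real.log_le_log_iff (by linarith [hα1' n]) (by linarith [hρ1' n])).mpr
          (by exact_mod_cast alpha_le_rho (R := strongPow E n))
      calc Real.log (aN n) / n ≤ Real.log (rN n) / n := by gcongr
        _ ≤ sSup Sρ := le_csSup bddSρ ⟨n, hn, rfl⟩
    -- Step B : ∀ m ≥ 1, log ρ(m)/m ≤ sSup Sα
    have stepB : ∀ m : ℕ, 1 ≤ m → Real.log (rN m) / m ≤ sSup Sα := by
      intro m hm
      have hm0 : (0:ℝ) < (m : ℝ) := by exact_mod_cast hm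
      set r : ℕ := rN m with hrdef
      have hr1 : (1:ℝ) ≤ (r:ℝ) := hρ1' m
      have key : ∀ k : ℕ, 1 ≤ k →
          Real.log r / m ≤ Real.log ((k*(r-1)+1 : ℕ)) / ((m:ℝ)*k) + sSup Sα := by
        intro k hk
        have hk0 : (0:ℝ) < (k : ℝ) := by exact_mod_cast hk
        have hmk1 : 1 ≤ m*k := Nat.one_le_iff_ne_zero.mpr (by positivity)
        have hineq := rho_pow_le_alpha (E := E) m k hk
        have hN1 : (1:ℝ) ≤ ((k*(r-1)+1 : ℕ) : ℝ) := by exact_mod_cast Nat.le_add_left 1 _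
        have ha1 : (1:ℝ) ≤ (aN (m*k) : ℝ) := hα1' (m*k)
        have hcast : ((r:ℝ))^k ≤ ((k*(r-1)+1 : ℕ):ℝ) * (aN (m*k) : ℝ) := by
          exact_mod_cast hineq
        have hlog : (k:ℝ) * Real.log r ≤
            Real.log ((k*(r-1)+1 : ℕ)) + Real.log (aN (m*k)) := by
          rw [← Real.log_pow, ← Real.log_mul (by linarith) (by linarith)]
          exact (Real.log_le_log_iff (by positivity) (by nlinarith)).mpr hcast
        have hSmem : Real.log (aN (m*k)) / ((m:ℝ)*(k:ℝ)) ≤ sSup Sα := by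
          have hmem : Real.log (aN (m*k)) / ((m*k : ℕ):ℝ) ∈ Sα := ⟨m*k, hmk1, rfl⟩
          have h2 := le_csSup bddSα hmem
          rwa [Nat.cast_mul] at h2
        have h3 : Real.log r / m = ((k:ℝ) * Real.log r) / ((m:ℝ)*k) := by
          field_simp
        rw [h3]
        calc ((k:ℝ) * Real.log r) / ((m:ℝ)*k)
            ≤ (Real.log ((k*(r-1)+1 : ℕ)) + Real.log (aN (m*k))) / ((m:ℝ)*k) := by
              gcongr
          _ = Real.log ((k*(r-1)+1 : ℕ)) / ((m:ℝ)*k)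
              + Real.log (aN (m*k)) / ((m:ℝ)*k) := add_div _ _ _
          _ ≤ Real.log ((k*(r-1)+1 : ℕ)) / ((m:ℝ)*k) + sSup Sα := by
              exact add_le_add_right hSmem _
      -- the error term tends to 0
      have hT1 : Tendsto (fun k : ℕ => Real.log k / (k:ℝ)) atTop (𝓝 0) :=
        (Real.isLittleO_log_id_atTop.tendsto_div_nhds_zero).comp tendsto_natCast_atTop_atTop
      have hT2 : Tendsto (fun k : ℕ => (Real.log k + Real.log r)/((m:ℝ)*k)) atTop (𝓝 0) := by
        have base : Tendsto (fun k : ℕ =>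
            (m:ℝ)⁻¹ * (Real.log k / k) + (Real.log r / (m:ℝ)) / k) atTop (𝓝 0) := by
          have b2 := tendsto_const_div_atTop_nhds_zero_nat (Real.log r / (m:ℝ))
          have b1 := hT1.const_mul ((m:ℝ)⁻¹)
          simpa using b1.add b2
        apply base.congr'
        filter_upwards [eventually_ge_atTop 1] with k hk
        have hk0 : (k:ℝ) ≠ 0 := by
          have : (0:ℝ) < (k:ℝ) := by exact_mod_cast hk
          linarith
        field_simp
        try ring
      have hφ : Tendsto (fun k : ℕ => Real.log ((k*(r-1)+1 : ℕ)) / ((m:ℝ)*k)) atTop (𝓝 0) := by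
        apply tendsto_of_tendsto_of_tendsto_of_le_of_le' tendsto_const_nhds hT2
        · filter_upwards [eventually_ge_atTop 1] with k hk
          have hk0 : (0:ℝ) < (k:ℝ) := by exact_mod_cast hk
          have hN1 : (1:ℝ) ≤ ((k*(r-1)+1 : ℕ) : ℝ) := by exact_mod_cast Nat.le_add_left 1 _
          positivity
        · filter_upwards [eventually_ge_atTop 1] with k hk
          have hk0 : (0:ℝ) < (k:ℝ) := by exact_mod_cast hk
          have hrn : 1 ≤ r := hρ1 m
          have hNle : (k*(r-1)+1 : ℕ) ≤ k * r := by
            have h5 : k*(r-1+1) = k*(r-1)+k := Nat.mul_succ k (r-1)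
            rw [Nat.sub_add_cancel hrn] at h5
            omega
          have hNle' : (((k*(r-1)+1 : ℕ)) : ℝ) ≤ (k:ℝ) * (r:ℝ) := by exact_mod_cast hNle
          have hN1 : (1:ℝ) ≤ ((k*(r-1)+1 : ℕ) : ℝ) := by exact_mod_cast Nat.le_add_left 1 _
          have hlogle : Real.log ((k*(r-1)+1 : ℕ)) ≤ Real.log k + Real.log r := by
            rw [← Real.log_mul (by linarith) (by linarith)]
            exact (Real.log_le_log_iff (by linarith) (by nlinarith)).mpr hNle'
          gcongr
      have hlim : Tendsto (fun k : ℕ =>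
          Real.log ((k*(r-1)+1 : ℕ)) / ((m:ℝ)*k) + sSup Sα) atTop (𝓝 (sSup Sα)) := by
        simpa using hφ.add (tendsto_const_nhds (x := sSup Sα))
      refine ge_of_tendsto hlim ?_
      filter_upwards [eventually_ge_atTop 1] with k hk using key k hk
    have stepB' : sSup Sρ ≤ sSup Sα := by
      apply csSup_le neSρ
      rintro x ⟨n, hn, rfl⟩
      exact stepB n hn
    have hSS : sSup Sα = sSup Sρ := le_antisymm stepA stepB'
    -- identify the Fekete limit with sSup Sρ
    have hfun : (fun n : ℕ => Real.log (rN n) / (n:ℝ)) = fun n : ℕ => -(u n / n) := by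
      funext n
      simp [hu, neg_div]
    have htend' : Tendsto (fun n : ℕ => Real.log (rN n) / (n:ℝ)) atTop (𝓝 (-hsub.lim)) := by
      rw [hfun]
      exact htendu.neg
    have hle1 : sSup Sρ ≤ -hsub.lim := by
      apply csSup_le neSρ
      rintro x ⟨n, hn, rfl⟩
      have h4 := hsub.lim_le_div hbdd (n := n) (by omega)
      simp only [hu, neg_div] at h4
      linarith
    have hle2 : -hsub.lim ≤ sSup Sρ :=
      le_of_tendsto htend' ((eventually_ge_atTop 1).mono fun n hn => le_csSup bddSρ ⟨n, hn, rfl⟩)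
    have hlimeq : -hsub.lim = sSup Sρ := le_antisymm hle2 hle1
    constructor
    · rw [hcap, hSS, ← hlimeq]
      exact htend'
    · rw [hcap, hSS]
  · -- V is empty
    haveI : IsEmpty V := not_nonempty_iff.mp hV
    have hzero : ∀ n : ℕ, 1 ≤ n → aN n = 0 ∧ rN n = 0 := by
      intro n hn
      haveI : IsEmpty (Fin n → V) := ⟨fun f => IsEmpty.false (f ⟨0, hn⟩)⟩
      constructor
      · have hset : {k : ℕ | ∃ A : Finset (Fin n → V),
            (∀ x ∈ A, ∀ y ∈ A, ¬ strongPow E n x y) ∧ A.card = k} = {0} := by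
          ext k
          constructor
          · rintro ⟨A, -, rfl⟩
            simp [Finset.eq_empty_of_isEmpty A]
          · rintro rfl
            exact ⟨∅, by simp, rfl⟩
        simp only [haN, alphaOf, hset, csSup_singleton]
      · have hset : {k : ℕ | ∃ A : Finset (Fin n → V),
            AcyclicOn (strongPow E n) ↑A ∧ A.card = k} = {0} := by
          ext k
          constructor
          · rintro ⟨A, -, rfl⟩
            simp [Finset.eq_empty_of_isEmpty A]
          · rintro rfl
            exact ⟨∅, acyclicOn_of_indep (by simp), rfl⟩
        simp only [hrN, rhoOf, hset, csSup_singleton]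
    have hSα0 : Sα = {0} := by
      ext x
      constructor
      · rintro ⟨n, hn, rfl⟩
        simp [(hzero n hn).1]
      · rintro rfl
        exact ⟨1, le_rfl, by simp [(hzero 1 le_rfl).1]⟩
    have hSρ0 : Sρ = {0} := by
      ext x
      constructor
      · rintro ⟨n, hn, rfl⟩
        simp [(hzero n hn).2]
      · rintro rfl
        exact ⟨1, le_rfl, by simp [(hzero 1 le_rfl).2]⟩
    have hcap0 : spernerCap E = 0 := by rw [hcap, hSα0, csSup_singleton]
    constructor
    · rw [hcap0]
      have hEq : (fun n : ℕ => Real.log (rN n) / n) =ᶠ[atTop] (fun _ => (0:ℝ)) := by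
        filter_upwards [eventually_ge_atTop 1] with n hn
        simp [(hzero n hn).2]
      exact Tendsto.congr' hEq.symm tendsto_const_nhds
    · rw [hcap0, hSρ0, csSup_singleton]
end

section
/- For every directed graph G, Σ_{x ∈ V(G)} 1/(1 + indeg(x,G)) ≤ ρ(G), where indeg(x,G) = |{x' ∈ V(G) : (x',x) ∈ E(G)}| is the in-degree of x and ρ(G) is the maximum cardinality of a subset of V(G) inducing an acyclic subgraph. -/
open Real Filter

lemma acyclicOn_empty {V : Type*} (E : V → V → Prop) : AcyclicOn E (∅ : Set V) := by
  rintro ⟨l, hlen, -, hmem, -⟩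
  match l, hlen with
  | a :: t, _ => exact absurd (hmem a (by simp)) (by simp)

lemma acyclic_insert {V : Type*} (E : V → V → Prop) (A : Set V) (v : V)
    (hA : AcyclicOn E A) (hv : ∀ u ∈ A, ¬ E u v) (hvv : ¬ E v v) :
    AcyclicOn E (insert v A) := by
  rintro ⟨l, hlen, hnd, hmem, hch, hcyc⟩
  by_cases hvl : v ∈ l
  · -- find predecessor u of v in cycle with E u v, u ≠ v
    obtain ⟨s, t, rfl⟩ := List.append_of_mem hvl
    have : ∃ u ∈ s ++ v :: t, u ≠ v ∧ E u v := by
      cases s with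
      | nil =>
        simp only [List.nil_append] at hlen hnd hch hcyc ⊢
        have ht : t ≠ [] := by
          cases t with
          | nil => simp at hlen
          | cons a t' => simp
        have hgl : (v :: t).getLast? = some (t.getLast ht) := by
          rw [List.getLast?_eq_getLast (by simp)]
          congr 1
          exact (List.getLast_cons ht)
        have hE := hcyc v rfl (t.getLast ht) hgl
        refine ⟨t.getLast ht, by simp [List.getLast_mem ht], ?_, hE⟩
        intro h
        have := (List.nodup_cons.mp hnd).1
        exact this (h ▸ List.getLast_mem ht)
      | cons a s' =>
        have hs : a :: s' ≠ [] := by simp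
        obtain ⟨-, -, hlink⟩ := List.isChain_append.mp hch
        have hE := hlink ((a :: s').getLast hs)
          (by simp [List.getLast?_eq_getLast hs]) v rfl
        have hu : (a :: s').getLast hs ∈ a :: s' := List.getLast_mem hs
        refine ⟨_, List.mem_append_left _ hu, ?_, hE⟩
        intro h
        have := (List.disjoint_of_nodup_append hnd) hu
        simp [h] at this
    obtain ⟨u, hul, hune, hE⟩ := this
    have : u ∈ insert v A := hmem u hul
    rcases this with h | h
    · exact hune h
    · exact hv u h hE
  · exact hA ⟨l, hlen, hnd, fun x hx => by
      rcases hmem x hx with h | h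
      · exact absurd (h ▸ hx) hvl
      · exact h, hch, hcyc⟩

open Finset in
lemma key {V : Type*} [Fintype V] [DecidableEq V] (E : V → V → Prop) [DecidableRel E]
    (hirr : ∀ x, ¬ E x x) (S : Finset V) :
    ∃ A : Finset V, A ⊆ S ∧ AcyclicOn E ↑A ∧
      ∑ x ∈ S, (1:ℝ) / (1 + ((S.filter (fun y => E y x)).card : ℝ)) ≤ A.card := by
  induction S using Finset.strongInduction with
  | _ S ih =>
    rcases S.eq_empty_or_nonempty with rfl | hne
    · exact ⟨∅, by simp, by simpa using acyclicOn_empty E, by simp⟩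
    obtain ⟨v, hvS, hvmin⟩ := S.exists_min_image
      (fun x => (S.filter (fun y => E y x)).card) hne
    set D := S.filter (fun y => E y v) with hD
    set T := S \ insert v D with hT
    have hvD : v ∉ D := by simp [hD, hirr v]
    have hDS : insert v D ⊆ S := insert_subset hvS (filter_subset _ _)
    have hTss : T ⊂ S := by
      refine Finset.ssubset_iff_of_subset (sdiff_subset) |>.mpr ⟨v, hvS, by simp [hT]⟩
    obtain ⟨A, hAT, hAac, hAsum⟩ := ih T hTss
    have hvA : v ∉ A := fun h => by simp [hT] at hAT; exact (Finset.mem_sdiff.mp (hAT h)).2 (by simp)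
    refine ⟨insert v A, insert_subset hvS (hAT.trans sdiff_subset), ?_, ?_⟩
    · have : ((insert v A : Finset V) : Set V) = insert v (A : Set V) := by simp
      rw [this]
      refine acyclic_insert E _ v hAac ?_ (hirr v)
      intro u hu hEuv
      have huT : u ∈ T := hAT hu
      rw [hT, Finset.mem_sdiff] at huT
      exact huT.2 (by simp [hD, mem_filter, huT.1, hEuv])
    · have hcard : (insert v A).card = A.card + 1 := card_insert_of_notMem hvA
      rw [hcard]
      have hsplit : ∑ x ∈ T, (1:ℝ) / (1 + ((S.filter (fun y => E y x)).card : ℝ))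
          + ∑ x ∈ insert v D, (1:ℝ) / (1 + ((S.filter (fun y => E y x)).card : ℝ))
          = ∑ x ∈ S, (1:ℝ) / (1 + ((S.filter (fun y => E y x)).card : ℝ)) :=
        Finset.sum_sdiff hDS
      rw [← hsplit]
      push_cast
      gcongr ?_ + ?_
      · calc ∑ x ∈ T, (1:ℝ) / (1 + ((S.filter (fun y => E y x)).card : ℝ))
            ≤ ∑ x ∈ T, (1:ℝ) / (1 + ((T.filter (fun y => E y x)).card : ℝ)) := by
              refine Finset.sum_le_sum fun x hx => ?_
              refine one_div_le_one_div_of_le (by positivity) ?_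
              have : (T.filter (fun y => E y x)).card ≤ (S.filter (fun y => E y x)).card :=
                Finset.card_le_card (Finset.filter_subset_filter _ sdiff_subset)
              exact_mod_cast Nat.add_le_add_left this 1
          _ ≤ A.card := hAsum
      · calc ∑ x ∈ insert v D, (1:ℝ) / (1 + ((S.filter (fun y => E y x)).card : ℝ))
            ≤ ∑ _x ∈ insert v D, (1:ℝ) / (1 + (D.card : ℝ)) := by
              refine Finset.sum_le_sum fun x hx => ?_
              refine one_div_le_one_div_of_le (by positivity) ?_
              have := hvmin x (hDS hx)
              exact_mod_cast Nat.add_le_add_left this 1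
          _ = 1 := by
              rw [Finset.sum_const, card_insert_of_notMem hvD]
              have h : (0:ℝ) < 1 + (D.card:ℝ) := by positivity
              rw [nsmul_eq_mul, Nat.cast_add, Nat.cast_one, mul_one_div, add_comm ((D.card:ℝ)) 1, div_self h.ne']

/-- Caro–Wei-type bound: `∑_{x ∈ V(G)} 1/(1 + indeg(x,G)) ≤ ρ(G)`, where
`indeg(x,G) = |{x' : (x',x) ∈ E(G)}|`. -/
theorem sum_inv_one_add_indeg_le_rho {V : Type*} [Fintype V] (E : V → V → Prop)
    (hirr : ∀ x, ¬ E x x) :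
    ∑ x : V, (1 : ℝ) / (1 + (Nat.card {x' : V // E x' x} : ℝ)) ≤ (rhoOf E : ℝ) := by
  classical
  obtain ⟨A, -, hAac, hsum⟩ := key E hirr Finset.univ
  have hcast : ∀ x : V, (Nat.card {x' : V // E x' x} : ℝ)
      = ((Finset.univ.filter (fun y => E y x)).card : ℝ) := by
    intro x
    rw [Nat.card_eq_fintype_card, Fintype.card_subtype]
  have h1 : ∑ x : V, (1:ℝ) / (1 + (Nat.card {x' : V // E x' x} : ℝ)) ≤ (A.card : ℝ) := by
    calc ∑ x : V, (1:ℝ) / (1 + (Nat.card {x' : V // E x' x} : ℝ))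
        = ∑ x ∈ Finset.univ, (1:ℝ) / (1 + ((Finset.univ.filter (fun y => E y x)).card : ℝ)) := by
          simp_rw [hcast]
      _ ≤ A.card := hsum
  refine h1.trans ?_
  have hle : A.card ≤ rhoOf E :=
    le_csSup ⟨Fintype.card V, fun k hk => by
      obtain ⟨B, -, rfl⟩ := hk; exact B.card_le_univ⟩ ⟨A, hAac, rfl⟩
  exact_mod_cast hle
end

section
/- For every acyclic directed graph G, the Sperner capacity equals the logarithm of the number of vertices: Σ(G) = log |V(G)|. -/
open Real Filter

section Aux
variable {V : Type*}

lemma exists_dup_split {l : List V} (h : ¬ l.Nodup) :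
    ∃ (a : List V) (x : V) (b c : List V), l = a ++ x :: (b ++ x :: c) := by
  induction l with
  | nil => simp at h
  | cons y t ih =>
    by_cases hy : y ∈ t
    · obtain ⟨b, c, rfl⟩ := List.append_of_mem hy
      exact ⟨[], y, b, c, rfl⟩
    · have ht : ¬ t.Nodup := fun hn => h (List.nodup_cons.mpr ⟨hy, hn⟩)
      obtain ⟨a, x, b, c, rfl⟩ := ih ht
      exact ⟨y :: a, x, b, c, rfl⟩

lemma chain_of_reflTransGen {E : V → V → Prop} {a b : V}
    (h : Relation.ReflTransGen E a b) :
    ∃ l : List V, l ≠ [] ∧ l.Chain' E ∧ l.head? = some a ∧ l.getLast? = some b := by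
  induction h with
  | refl => exact ⟨[a], by simp, List.isChain_singleton a, rfl, rfl⟩
  | @tail b c hab hbc ih =>
    obtain ⟨l, hne, hch, hh, hl⟩ := ih
    refine ⟨l ++ [c], by simp, ?_, ?_, ?_⟩
    · apply List.isChain_append.mpr
      refine ⟨hch, by simp, ?_⟩
      intro x hx y hy
      simp only [List.head?_cons, Option.mem_def, Option.some.injEq] at hy
      rw [hl] at hx
      simp only [Option.mem_def, Option.some.injEq] at hx
      subst hx; subst hy; exact hbc
    · rw [List.head?_append_of_ne_nil _ hne, hh]
    · simp [List.getLast?_concat]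

lemma no_closed_chain {E : V → V → Prop} (hirr : ∀ x, ¬ E x x)
    (hacyc : AcyclicOn E Set.univ) :
    ∀ n (l : List V), l.length = n → l ≠ [] → l.Chain' E →
      (∀ x ∈ l.head?, ∀ y ∈ l.getLast?, E y x) → False := by
  intro n
  induction n using Nat.strong_induction_on with
  | _ n ih =>
    intro l hlen hne hch hcl
    by_cases hnd : l.Nodup
    · match l, hne with
      | [x], _ =>
        exact hirr x (hcl x rfl x rfl)
      | x :: y :: t, _ =>
        exact hacyc ⟨x :: y :: t, by simp, hnd, fun z _ => Set.mem_univ z, hch, hcl⟩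
    · obtain ⟨a, x, b, c, rfl⟩ := exists_dup_split hnd
      have hch2 : (x :: (b ++ x :: c)).Chain' E :=
        (List.isChain_append.mp hch).2.1
      have hch3 : ((x :: b) ++ (x :: c)).Chain' E := by
        simpa using hch2
      have hch4 := List.isChain_append.mp hch3
      have hlink : ∀ p ∈ (x :: b).getLast?, E p x := fun p hp => hch4.2.2 p hp x rfl
      refine ih (x :: b).length ?_ (x :: b) rfl (by simp) hch4.1 ?_
      · rw [← hlen]; simp; omega
      · intro p hp q hq
        simp only [List.head?_cons, Option.mem_def, Option.some.injEq] at hp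
        subst hp
        exact hlink q hq

lemma transGen_irrefl {E : V → V → Prop} (hirr : ∀ x, ¬ E x x)
    (hacyc : AcyclicOn E Set.univ) (x : V) : ¬ Relation.TransGen E x x := by
  intro hx
  obtain ⟨b, hab, hba⟩ := Relation.TransGen.tail'_iff.mp hx
  obtain ⟨l, hne, hch, hh, hl⟩ := chain_of_reflTransGen hab
  refine no_closed_chain hirr hacyc l.length l rfl hne hch ?_
  intro p hp q hq
  rw [hh] at hp; rw [hl] at hq
  simp only [Option.mem_def, Option.some.injEq] at hp hq
  subst hp; subst hq; exact hba

end Aux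

section Alpha
variable {W : Type*} [Fintype W]

lemma alphaOf_le_card (E : W → W → Prop) : alphaOf E ≤ Fintype.card W := by
  have h0 : (0:ℕ) ∈ {k : ℕ | ∃ A : Finset W, (∀ x ∈ A, ∀ y ∈ A, ¬ E x y) ∧ A.card = k} :=
    ⟨∅, by simp, by simp⟩
  apply csSup_le ⟨0, h0⟩
  rintro k ⟨A, -, rfl⟩
  exact A.card_le_univ

lemma le_alphaOf (E : W → W → Prop) {A : Finset W}
    (h : ∀ x ∈ A, ∀ y ∈ A, ¬ E x y) : A.card ≤ alphaOf E := by
  refine le_csSup ⟨Fintype.card W, ?_⟩ ⟨A, h, rfl⟩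
  rintro k ⟨B, -, rfl⟩
  exact B.card_le_univ

end Alpha

section Count
variable {V : Type*} [Fintype V]

lemma alpha_lower (E : V → V → Prop) (f : V → ℕ)
    (hmono : ∀ x y, E x y → f x < f y) (M : ℕ) (hM : ∀ x, f x ≤ M) (n : ℕ) :
    Fintype.card V ^ n ≤ (n * M + 1) * alphaOf (strongPow E n) := by
  classical
  set K := n * M + 1 with hK
  set g : (Fin n → V) → ℕ := fun x => ∑ j, f (x j) with hg
  have hmem : ∀ x : Fin n → V, g x ∈ Finset.range K := by
    intro x
    simp only [Finset.mem_range, hK]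
    have : g x ≤ ∑ _j : Fin n, M := Finset.sum_le_sum fun j _ => hM (x j)
    simp only [Finset.sum_const, Finset.card_univ, Fintype.card_fin, smul_eq_mul] at this
    omega
  have hcount : Fintype.card (Fin n → V)
      = ∑ t ∈ Finset.range K, (Finset.univ.filter fun x => g x = t).card := by
    rw [← Finset.card_univ]
    exact Finset.card_eq_sum_card_fiberwise fun x _ => hmem x
  set m := (Finset.range K).sup (fun t => (Finset.univ.filter fun x => g x = t).card) with hm
  have hsum_le : Fintype.card (Fin n → V) ≤ K * m := by
    rw [hcount]
    calc ∑ t ∈ Finset.range K, (Finset.univ.filter fun x => g x = t).card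
        ≤ (Finset.range K).card • m :=
          Finset.sum_le_card_nsmul _ _ _ fun t ht =>
            Finset.le_sup (f := fun t => (Finset.univ.filter fun x => g x = t).card) ht
      _ = K * m := by simp
  obtain ⟨t, -, hmt⟩ := Finset.exists_mem_eq_sup (Finset.range K)
    ⟨0, by simp [hK]⟩ (fun t => (Finset.univ.filter fun x => g x = t).card)
  have hindep : ∀ x ∈ Finset.univ.filter (fun x => g x = t),
      ∀ y ∈ Finset.univ.filter (fun x => g x = t), ¬ strongPow E n x y := by
    intro x hx y hy hxy
    obtain ⟨hne, hall⟩ := hxy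
    simp only [Finset.mem_filter] at hx hy
    obtain ⟨j0, hj0⟩ := Function.ne_iff.mp hne
    have hlt : g x < g y := by
      refine Finset.sum_lt_sum (fun j _ => ?_) ⟨j0, Finset.mem_univ _, ?_⟩
      · rcases hall j with h | h
        · exact (h ▸ le_refl _)
        · exact (hmono _ _ h).le
      · rcases hall j0 with h | h
        · exact absurd h hj0
        · exact hmono _ _ h
    omega
  have hαm : m ≤ alphaOf (strongPow E n) := by
    rw [hm, hmt]
    exact le_alphaOf _ hindep
  have hcard : Fintype.card (Fin n → V) = Fintype.card V ^ n := by
    rw [Fintype.card_fun, Fintype.card_fin]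
  calc Fintype.card V ^ n = Fintype.card (Fin n → V) := hcard.symm
    _ ≤ K * m := hsum_le
    _ ≤ K * alphaOf (strongPow E n) := Nat.mul_le_mul_left _ hαm

end Count

/-- For every acyclic directed graph `G`, the Sperner capacity equals
`log |V(G)|`. -/
theorem spernerCap_of_acyclic {V : Type*} [Fintype V] (E : V → V → Prop)
    (hirr : ∀ x, ¬ E x x) (hacyc : AcyclicOn E Set.univ) :
    spernerCap E = Real.log (Fintype.card V) := by
  classical
  set S := {x : ℝ | ∃ n : ℕ, 1 ≤ n ∧ x = Real.log (alphaOf (strongPow E n)) / n} with hS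
  have hcap : spernerCap E = sSup S := by rw [spernerCap, hS]
  have hSne : S.Nonempty := ⟨_, 1, le_refl 1, rfl⟩
  rcases isEmpty_or_nonempty V with hV | hV
  · have hcard0 : Fintype.card V = 0 := Fintype.card_eq_zero
    have hzero : ∀ n : ℕ, 1 ≤ n → alphaOf (strongPow E n) = 0 := by
      intro n hn
      have h := alphaOf_le_card (strongPow E n)
      rw [Fintype.card_fun, Fintype.card_fin, hcard0, Nat.zero_pow (by omega)] at h
      omega
    have hSsing : S = {0} := by
      ext x
      simp only [hS, Set.mem_setOf_eq, Set.mem_singleton_iff]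
      constructor
      · rintro ⟨n, hn, rfl⟩
        rw [hzero n hn]; simp
      · rintro rfl
        exact ⟨1, le_refl 1, by rw [hzero 1 (le_refl 1)]; simp⟩
    rw [hcap, hSsing, csSup_singleton, hcard0]
    simp
  · obtain ⟨v⟩ := hV
    have hN1 : 1 ≤ Fintype.card V := Fintype.card_pos_iff.mpr ⟨v⟩
    set N := Fintype.card V with hNdef
    have hTirr := transGen_irrefl hirr hacyc
    set f : V → ℕ := fun x => (Finset.univ.filter fun y => Relation.TransGen E y x).card with hf
    have hmono : ∀ x y, E x y → f x < f y := by
      intro x y hxy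
      apply Finset.card_lt_card
      constructor
      · intro z hz
        simp only [Finset.mem_filter, Finset.mem_univ, true_and] at hz ⊢
        exact hz.trans (Relation.TransGen.single hxy)
      · intro hsub
        have hx : x ∈ Finset.univ.filter fun z => Relation.TransGen E z y := by
          simp [Relation.TransGen.single hxy]
        have hxx := hsub hx
        simp only [Finset.mem_filter, Finset.mem_univ, true_and] at hxx
        exact hTirr x hxx
    set M := Finset.univ.sup f with hM
    have hfM : ∀ x, f x ≤ M := fun x => Finset.le_sup (Finset.mem_univ x)
    have hα1 : ∀ n : ℕ, 1 ≤ n → 1 ≤ alphaOf (strongPow E n) := by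
      intro n hn
      have h : ({fun _ => v} : Finset (Fin n → V)).card ≤ alphaOf (strongPow E n) := by
        apply le_alphaOf
        intro x hx y hy hxy
        simp only [Finset.mem_singleton] at hx hy
        exact hxy.1 (hx.trans hy.symm)
      simpa using h
    have hαle : ∀ n : ℕ, alphaOf (strongPow E n) ≤ N ^ n := by
      intro n
      have h := alphaOf_le_card (strongPow E n)
      rwa [Fintype.card_fun, Fintype.card_fin] at h
    have hub : ∀ x ∈ S, x ≤ Real.log N := by
      rintro x ⟨n, hn, rfl⟩
      have hnpos : (0:ℝ) < n := by exact_mod_cast hn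
      have hpos : (0:ℝ) < (alphaOf (strongPow E n) : ℝ) := by exact_mod_cast hα1 n hn
      have hle2 : ((alphaOf (strongPow E n) : ℝ)) ≤ (N:ℝ) ^ n := by exact_mod_cast hαle n
      rw [div_le_iff₀ hnpos]
      calc Real.log (alphaOf (strongPow E n)) ≤ Real.log ((N:ℝ) ^ n) :=
            Real.log_le_log hpos hle2
        _ = n * Real.log N := by rw [Real.log_pow]
        _ = Real.log N * n := mul_comm _ _
    have hbdd : BddAbove S := ⟨_, hub⟩
    have hle : sSup S ≤ Real.log N := csSup_le hSne hub
    have hlow : ∀ n : ℕ, 1 ≤ n →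
        Real.log N - Real.log ((n:ℝ) * M + 1) / n
          ≤ Real.log (alphaOf (strongPow E n)) / n := by
      intro n hn
      have hnpos : (0:ℝ) < n := by exact_mod_cast hn
      have hKpos : (0:ℝ) < (n:ℝ) * M + 1 := by positivity
      have key := alpha_lower E f hmono M hfM n
      have hkeyR : (N:ℝ)^n ≤ ((n:ℝ) * M + 1) * (alphaOf (strongPow E n)) := by
        exact_mod_cast key
      have h1 : (N:ℝ)^n / ((n:ℝ) * M + 1) ≤ (alphaOf (strongPow E n) : ℝ) :=
        (div_le_iff₀ hKpos).mpr (by linarith)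
      have h2 : Real.log ((N:ℝ)^n / ((n:ℝ) * M + 1))
          ≤ Real.log (alphaOf (strongPow E n)) :=
        Real.log_le_log (by positivity) h1
      rw [Real.log_div (by positivity) (ne_of_gt hKpos), Real.log_pow] at h2
      have heq : Real.log (N:ℝ) - Real.log ((n:ℝ) * M + 1) / n
          = ((n:ℝ) * Real.log N - Real.log ((n:ℝ) * M + 1)) / n := by
        field_simp
      rw [heq]
      exact (div_le_div_iff_of_pos_right hnpos).mpr (by linarith)
    have hge : Real.log (N:ℝ) ≤ sSup S := by
      by_contra hcon
      push_neg at hcon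
      set ε := Real.log N - sSup S with hε
      have hεpos : 0 < ε := by simp only [hε]; linarith
      have htend : Tendsto (fun n : ℕ => Real.log ((n:ℝ) * M + 1) / n) atTop (nhds 0) := by
        rcases Nat.eq_zero_or_pos M with hM0 | hMpos
        · have heq : (fun n : ℕ => Real.log ((n:ℝ) * M + 1) / n) = fun _ => 0 := by
            funext n; rw [hM0]; push_cast; simp
          rw [heq]; exact tendsto_const_nhds
        · have hMpos' : (0:ℝ) < M := by exact_mod_cast hMpos
          have h1 := Real.tendsto_pow_log_div_mul_add_atTop
            (1/(M:ℝ)) (-(1/(M:ℝ))) 1 (by positivity)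
          have h2 : Tendsto (fun n : ℕ => (n:ℝ) * (M:ℝ) + 1) atTop atTop :=
            tendsto_atTop_add_const_right _ _
              (Tendsto.atTop_mul_const hMpos' tendsto_natCast_atTop_atTop)
          have h3 := h1.comp h2
          refine h3.congr fun n => ?_
          simp only [Function.comp_apply, pow_one]
          congr 1
          field_simp
          ring
      have hev : ∀ᶠ n : ℕ in atTop, Real.log ((n:ℝ) * M + 1) / n < ε :=
        htend.eventually (gt_mem_nhds hεpos)
      obtain ⟨n, hnε, hn1⟩ := (hev.and (eventually_ge_atTop 1)).exists
      have hmem : Real.log (alphaOf (strongPow E n)) / n ∈ S := ⟨n, hn1, rfl⟩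
      have hxle : Real.log (alphaOf (strongPow E n)) / n ≤ sSup S := le_csSup hbdd hmem
      have hlow' := hlow n hn1
      rw [hε] at hnε
      linarith
    rw [hcap]
    exact le_antisymm hle hge
end

section
/- For every acyclic directed graph G with q = |V(G)| ≥ 1 vertices and every n ≥ 1, the maximum size of an independent set in the n-fold strong power satisfies α(G^n) ≥ q^n / (nq − n + 1). -/
open Real Filter

/-- From any `E`-chain from `a` we can extract a duplicate-free one with the
same last element, using only vertices of the original chain. -/
lemma exists_nodup_chain_aux {V : Type*} {E : V → V → Prop} :
    ∀ (l : List V) (a : V), l.Chain E a →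
      ∃ l' : List V, l'.Chain E a ∧ (a :: l').Nodup ∧
        (a :: l').getLast? = (a :: l).getLast? := by
  intro l
  induction l with
  | nil => intro a _; exact ⟨[], List.Chain.nil, List.nodup_singleton a, rfl⟩
  | cons b t ih =>
    intro a hc
    rcases List.chain_cons.mp hc with ⟨hab, hbt⟩
    obtain ⟨t', ht'c, ht'nd, ht'last⟩ := ih b hbt
    by_cases ha : a ∈ b :: t'
    · obtain ⟨u, v, huv⟩ := List.append_of_mem ha
      have hsuf : (a :: v) <:+ (b :: t') := ⟨u, huv.symm⟩
      refine ⟨v, ?_, ?_, ?_⟩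
      · have hch : (b :: t').Chain' E := ht'c
        exact (hch.suffix hsuf)
      · exact (hsuf.sublist).nodup ht'nd
      · have h1 : (b :: t').getLast? = (a :: v).getLast? := by
          rw [huv]
          exact List.getLast?_append_of_ne_nil u (by simp)
        rw [← h1, ht'last, List.getLast?_cons_cons]
    · exact ⟨b :: t', List.chain_cons.mpr ⟨hab, ht'c⟩,
        List.nodup_cons.mpr ⟨ha, ht'nd⟩, by
          rw [List.getLast?_cons_cons, List.getLast?_cons_cons, ht'last]⟩

lemma transGen_irrefl_of_acyclic {V : Type*} {E : V → V → Prop}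
    (hirr : ∀ x, ¬ E x x) (hacyc : AcyclicOn E Set.univ) :
    ∀ x, ¬ Relation.TransGen E x x := by
  intro x hx
  rcases Relation.TransGen.head'_iff.mp hx with ⟨y, hxy, hyx⟩
  obtain ⟨l, hl, hlast⟩ := List.exists_isChain_cons_of_relationReflTransGen hyx
  obtain ⟨l', hl'c, hl'nd, hl'last⟩ := exists_nodup_chain_aux l y hl
  have hlast' : (y :: l').getLast? = some x := by
    rw [hl'last, List.getLast?_eq_getLast (List.cons_ne_nil _ _), hlast]
  apply hacyc
  refine ⟨y :: l', ?_, hl'nd, fun z _ => Set.mem_univ z, hl'c, ?_⟩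
  · -- length ≥ 2
    rcases l' with _ | ⟨c, t⟩
    · exfalso
      simp only [List.getLast?_singleton, Option.some_inj] at hlast'
      exact hirr x (hlast' ▸ hxy)
    · simp
  · intro z hz w hw
    simp only [List.head?_cons, Option.mem_def, Option.some_inj] at hz
    rw [Option.mem_def, hlast', Option.some_inj] at hw
    subst hz; subst hw
    exact hxy

/-- For every acyclic directed graph `G` with `q = |V(G)| ≥ 1` vertices and
every `n ≥ 1`, `α(Gⁿ) ≥ qⁿ / (nq − n + 1)`. -/
theorem alpha_strongPow_ge_of_acyclic {V : Type*} [Fintype V] (E : V → V → Prop)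
    (hirr : ∀ x, ¬ E x x) (hacyc : AcyclicOn E Set.univ)
    (hq : 1 ≤ Fintype.card V) (n : ℕ) (hn : 1 ≤ n) :
    (Fintype.card V : ℝ) ^ n /
        ((n : ℝ) * (Fintype.card V : ℝ) - (n : ℝ) + 1)
      ≤ (alphaOf (strongPow E n) : ℝ) := by
  classical
  set q := Fintype.card V with hqdef
  have hTG := transGen_irrefl_of_acyclic hirr hacyc
  -- rank function from acyclicity
  set r : V → ℕ := fun x => (Finset.univ.filter fun y => Relation.TransGen E y x).card
    with hr
  have hrmono : ∀ x y, E x y → r x < r y := by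
    intro x y hxy
    apply Finset.card_lt_card
    constructor
    · intro z hz
      simp only [Finset.mem_filter, Finset.mem_univ, true_and] at hz ⊢
      exact hz.tail hxy
    · intro hsub
      have hx : x ∈ Finset.univ.filter fun z => Relation.TransGen E z y := by
        simp [Relation.TransGen.single hxy]
      have := hsub hx
      simp only [Finset.mem_filter, Finset.mem_univ, true_and] at this
      exact hTG x this
  have hrbound : ∀ x, r x ≤ q - 1 := by
    intro x
    have : (Finset.univ.filter fun y => Relation.TransGen E y x) ⊆
        Finset.univ.erase x := by
      intro z hz
      simp only [Finset.mem_filter, Finset.mem_univ, true_and] at hz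
      refine Finset.mem_erase.mpr ⟨?_, Finset.mem_univ z⟩
      rintro rfl
      exact hTG z hz
    calc r x ≤ (Finset.univ.erase x).card := Finset.card_le_card this
      _ = q - 1 := by rw [Finset.card_erase_of_mem (Finset.mem_univ x), Finset.card_univ]
  -- total rank
  set F : (Fin n → V) → ℕ := fun x => ∑ j, r (x j) with hF
  set N : ℕ := n * (q - 1) + 1 with hN
  have hFmem : ∀ x : Fin n → V, F x ∈ Finset.range N := by
    intro x
    rw [Finset.mem_range, hN, Nat.lt_succ_iff]
    calc F x ≤ ∑ _j : Fin n, (q - 1) := Finset.sum_le_sum fun j _ => hrbound (x j)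
      _ = n * (q - 1) := by simp [mul_comm]
  -- pigeonhole: a fiber of maximal size
  obtain ⟨s₀, hs₀mem, hs₀max⟩ := Finset.exists_max_image (Finset.range N)
    (fun s => (Finset.univ.filter fun x : Fin n → V => F x = s).card)
    ⟨0, by simp [hN]⟩
  set m := (Finset.univ.filter fun x : Fin n → V => F x = s₀).card with hm
  have hcount : q ^ n ≤ N * m := by
    have h1 : (Finset.univ : Finset (Fin n → V)).card =
        ∑ s ∈ Finset.range N, (Finset.univ.filter fun x => F x = s).card :=
      Finset.card_eq_sum_card_fiberwise fun x _ => hFmem x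
    have h2 : ∑ s ∈ Finset.range N, (Finset.univ.filter fun x : Fin n → V => F x = s).card
        ≤ ∑ _s ∈ Finset.range N, m := Finset.sum_le_sum fun s hs => hs₀max s hs
    have h3 : (Finset.univ : Finset (Fin n → V)).card = q ^ n := by
      simp [Finset.card_univ, hqdef]
    calc q ^ n = (Finset.univ : Finset (Fin n → V)).card := h3.symm
      _ ≤ ∑ _s ∈ Finset.range N, m := h1 ▸ h2
      _ = N * m := by simp [Finset.sum_const, Finset.card_range, mul_comm]
  -- the fiber is independent in the strong power
  have hindep : ∀ x ∈ Finset.univ.filter (fun x : Fin n → V => F x = s₀),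
      ∀ y ∈ Finset.univ.filter (fun x : Fin n → V => F x = s₀),
      ¬ strongPow E n x y := by
    intro x hx y hy ⟨hne, hall⟩
    simp only [Finset.mem_filter, Finset.mem_univ, true_and] at hx hy
    have hlt : F x < F y := by
      obtain ⟨j₀, hj₀⟩ : ∃ j, x j ≠ y j := by
        by_contra h
        push_neg at h
        exact hne (funext h)
      refine Finset.sum_lt_sum (fun j _ => ?_) ⟨j₀, Finset.mem_univ j₀, ?_⟩
      · rcases hall j with h | h
        · rw [h]
        · exact (hrmono _ _ h).le
      · rcases hall j₀ with h | h
        · exact absurd h hj₀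
        · exact hrmono _ _ h
    rw [hx, hy] at hlt
    exact lt_irrefl _ hlt
  -- hence m ≤ α
  have hmalpha : m ≤ alphaOf (strongPow E n) := by
    apply le_csSup
    · refine ⟨Fintype.card (Fin n → V), ?_⟩
      rintro k ⟨A, _, rfl⟩
      exact A.card_le_univ.trans_eq (Finset.card_univ)
    · exact ⟨_, hindep, rfl⟩
  -- arithmetic conclusion
  have hNpos : (0 : ℝ) < N := by positivity
  have hNcast : (N : ℝ) = (n : ℝ) * (q : ℝ) - (n : ℝ) + 1 := by
    rw [hN]
    push_cast [Nat.cast_sub hq]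
    ring
  rw [← hNcast, div_le_iff₀ hNpos]
  calc ((q : ℝ)) ^ n ≤ (N * m : ℕ) := by exact_mod_cast hcount
    _ = (m : ℝ) * N := by push_cast; ring
    _ ≤ (alphaOf (strongPow E n) : ℝ) * N := by
        have : (m : ℝ) ≤ alphaOf (strongPow E n) := by exact_mod_cast hmalpha
        exact mul_le_mul_of_nonneg_right this hNpos.le
end
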